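/- arXiv:1309.1290 — 4 statements merged into one kernel-verified Lean document; each statement's English description precedes it below -/
import Mathlib

section
/- Let β ∈ L. Let P be the graph product over the subgraph of (L, I) induced by L ∖ {β}, let A be the graph product over the subgraph induced by the link of β, i.e. {α ∈ L ∖ {β} : (α, β) ∈ I}, and let B = G_β. Then the canonical homomorphisms from P and from A × B into G induce an isomorphism from the amalgamated free product P ⋆_A (A × B) — the pushout of the canonical homomorphism A → P and the homomorphism A → A × B, a ↦ (a, 1) — onto the graph product G. -/
/-- The set of commutator relators defining a graph product. -/
def gpRels {L : Type} (I : L → L → Prop) (G : L → Type) [∀ α, Group (G α)] :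
    Set (Monoid.CoprodI G) :=
  {x | ∃ (α β : L) (g : G α) (h : G β), I α β ∧
    x = Monoid.CoprodI.of g * Monoid.CoprodI.of h *
        (Monoid.CoprodI.of g)⁻¹ * (Monoid.CoprodI.of h)⁻¹}

/-- The graph product of the groups `G α` over the independence relation `I`. -/
def GP {L : Type} (I : L → L → Prop) (G : L → Type) [∀ α, Group (G α)] : Type :=
  Monoid.CoprodI G ⧸ Subgroup.normalClosure (gpRels I G)

instance {L : Type} (I : L → L → Prop) (G : L → Type) [∀ α, Group (G α)] :
    Group (GP I G) := QuotientGroup.Quotient.group _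

/-- The canonical homomorphism of a node group into the graph product. -/
def gpOf {L : Type} (I : L → L → Prop) (G : L → Type) [∀ α, Group (G α)] (α : L) :
    G α →* GP I G :=
  (QuotientGroup.mk' _).comp Monoid.CoprodI.of

/-- A letter: a nontrivial element of one of the node groups. -/
abbrev Letter (L : Type) (G : L → Type) [∀ α, Group (G α)] : Type :=
  Σ α : L, {g : G α // g ≠ 1}

variable {L : Type} (I : L → L → Prop) (G : L → Type) [∀ α, Group (G α)]

/-- The element of the graph product represented by a word. -/
def evalWord (w : List (Letter L G)) : GP I G :=
  (w.map fun l => gpOf I G l.1 l.2.1).prod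

/-- One elementary commutation step between trace-equivalent words. -/
inductive TraceStep : List (Letter L G) → List (Letter L G) → Prop
  | swap (u v : List (Letter L G)) (a b : Letter L G) (h : I a.1 b.1) :
      TraceStep (u ++ a :: b :: v) (u ++ b :: a :: v)

/-- Trace equivalence: the congruence generated by commuting independent letters. -/
def TraceEquiv : List (Letter L G) → List (Letter L G) → Prop :=
  Relation.EqvGen (TraceStep I G)

/-- `IndepWord I G β u` means every letter of `u` is independent of `β`,
i.e. `u ∈ I(β)`. -/
def IndepWord (β : L) (u : List (Letter L G)) : Prop := ∀ c ∈ u, I c.1 β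

/-- A word is reduced if it contains no factor `b u b'` with `b, b' ∈ Γ_β`
and `u ∈ I(β)`. -/
def Reduced (w : List (Letter L G)) : Prop :=
  ¬ ∃ (β : L) (b b' : {g : G β // g ≠ 1}) (x u y : List (Letter L G)),
      w = x ++ (⟨β, b⟩ : Letter L G) :: (u ++ (⟨β, b'⟩ : Letter L G) :: y) ∧
      IndepWord I G β u

/-- `|w|_α` : number of letters of `w` in `Γ_α`. -/
noncomputable def countAlpha (α : L) (w : List (Letter L G)) : ℕ :=
  (w.filter fun l => Classical.propDecidable (l.1 = α) |>.decide).length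

/-- The alphabet `al(w)` of a word. -/
def alph (w : List (Letter L G)) : Set L := {α | ∃ l ∈ w, l.1 = α}

/-- A reduced word is cyclically reduced if it has no factorization `≡ a v a'`
with `a, a'` letters from the same node group. -/
def IsCyclicallyReduced (w : List (Letter L G)) : Prop :=
  Reduced I G w ∧
  ¬ ∃ (α : L) (a a' : {g : G α // g ≠ 1}) (v : List (Letter L G)),
      TraceEquiv I G w ((⟨α, a⟩ : Letter L G) :: (v ++ [(⟨α, a'⟩ : Letter L G)]))

/-- Words `u` and `v` are transposed if `u ≡ r s` and `v ≡ s r`. -/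
def Transposed (u v : List (Letter L G)) : Prop :=
  ∃ r s : List (Letter L G), TraceEquiv I G u (r ++ s) ∧ TraceEquiv I G v (s ++ r)

/-- `u ≈ v` : the reflexive-transitive closure of transposition. -/
def TransClosure : List (Letter L G) → List (Letter L G) → Prop :=
  Relation.ReflTransGen (Transposed I G)

/-- The formal inverse of a letter. -/
def letterInv (l : Letter L G) : Letter L G :=
  ⟨l.1, ⟨(l.2 : G l.1)⁻¹, inv_ne_one.mpr l.2.2⟩⟩

/-- The formal inverse `p̄` of a word `p`. -/
def wordInv (w : List (Letter L G)) : List (Letter L G) :=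
  (w.map (letterInv G)).reverse

/-- The dependence graph on `L`: distinct nodes are adjacent iff not independent. -/
def depGraph : SimpleGraph L where
  Adj a b := a ≠ b ∧ ¬ I a b ∧ ¬ I b a
  symm := by
    constructor
    intro a b ⟨h1, h2, h3⟩
    exact ⟨h1.symm, h3, h2⟩
  loopless := by constructor; intro a ⟨h1, _⟩; exact h1 rfl

/-- A word is connected if its alphabet induces a connected subgraph of the
dependence graph. -/
def ConnectedWord (w : List (Letter L G)) : Prop :=
  ((depGraph I).induce (alph G w)).Connected

/-- A word `w` is `α`-reduced if every word with fewer letters from `Γ_α`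
represents a different element of the graph product. -/
def AlphaReduced (α : L) (w : List (Letter L G)) : Prop :=
  ∀ w' : List (Letter L G), countAlpha G α w' < countAlpha G α w →
    evalWord I G w' ≠ evalWord I G w

/-- The two-element family of groups `{P, Q}` indexed by `Bool`, used to form
the amalgamated product `P ⋆_A Q` as an indexed pushout. -/
def amalFam (P Q : Type) : Bool → Type
  | true => P
  | false => Q

instance (P Q : Type) [Group P] [Group Q] (i : Bool) : Group (amalFam P Q i) := by
  cases i <;> dsimp [amalFam] <;> infer_instance

/-- Restriction of the independence relation to a subset of the nodes. -/
abbrev restI {L : Type} (I : L → L → Prop) (Q : L → Prop) :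
    {α : L // Q α} → {α : L // Q α} → Prop :=
  fun a b => I a.1 b.1

/-- Restriction of the family of node groups to a subset of the nodes. -/
abbrev restG {L : Type} (G : L → Type) (Q : L → Prop) : {α : L // Q α} → Type :=
  fun a => G a.1

section AuxGP

variable {L' : Type} {I' : L' → L' → Prop} {G' : L' → Type} [∀ α, Group (G' α)]

theorem gpOf_commute {α β : L'} (h : I' α β) (g : G' α) (h' : G' β) :
    Commute (gpOf I' G' α g) (gpOf I' G' β h') := by
  have h1 : (QuotientGroup.mk' (Subgroup.normalClosure (gpRels I' G')))
      (Monoid.CoprodI.of g * Monoid.CoprodI.of h' * (Monoid.CoprodI.of g)⁻¹ *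
        (Monoid.CoprodI.of h')⁻¹) = 1 := by
    rw [QuotientGroup.mk'_apply, QuotientGroup.eq_one_iff]
    exact Subgroup.subset_normalClosure ⟨α, β, g, h', h, rfl⟩
  simp only [map_mul, map_inv] at h1
  have h2 : gpOf I' G' α g * gpOf I' G' β h' * (gpOf I' G' α g)⁻¹ *
      (gpOf I' G' β h')⁻¹ = 1 := h1
  rw [mul_inv_eq_one, mul_inv_eq_iff_eq_mul] at h2
  exact h2

theorem gp_hom_ext {K : Type*} [Group K] {f g : GP I' G' →* K}
    (h : ∀ (α : L') (x : G' α), f (gpOf I' G' α x) = g (gpOf I' G' α x)) : f = g := by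
  have h2 : f.comp (QuotientGroup.mk' (Subgroup.normalClosure (gpRels I' G'))) =
      g.comp (QuotientGroup.mk' (Subgroup.normalClosure (gpRels I' G'))) :=
    Monoid.CoprodI.ext_hom _ _ fun α => MonoidHom.ext fun x => h α x
  ext x
  obtain ⟨y, rfl⟩ := QuotientGroup.mk'_surjective (Subgroup.normalClosure (gpRels I' G')) x
  exact DFunLike.congr_fun h2 y

/-- Universal property of the graph product. -/
def gpLift {K : Type*} [Group K] (f : ∀ α, G' α →* K)
    (hf : ∀ (α β : L') (g : G' α) (h' : G' β), I' α β → Commute (f α g) (f β h')) :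
    GP I' G' →* K :=
  QuotientGroup.lift _ (Monoid.CoprodI.lift f) (by
    intro x hx
    refine Subgroup.normalClosure_le_normal ?_ hx
    rintro _ ⟨α, β, g, h', hI, rfl⟩
    have hc := hf α β g h' hI
    simp only [SetLike.mem_coe, MonoidHom.mem_ker, map_mul, map_inv,
      Monoid.CoprodI.lift_of]
    rw [mul_inv_eq_one, mul_inv_eq_iff_eq_mul]
    exact hc.eq)

@[simp]
theorem gpLift_of {K : Type*} [Group K] (f : ∀ α, G' α →* K)
    (hf : ∀ (α β : L') (g : G' α) (h' : G' β), I' α β → Commute (f α g) (f β h'))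
    (α : L') (g : G' α) : gpLift f hf (gpOf I' G' α g) = f α g := by
  show QuotientGroup.lift _ _ _ (QuotientGroup.mk _) = _
  rw [QuotientGroup.lift_mk, Monoid.CoprodI.lift_of]

/-- Cast hom between node groups of equal indices. -/
def gpCastHom {α β : L'} (h : α = β) : G' α →* G' β := by
  subst h; exact MonoidHom.id _

end AuxGP

set_option maxHeartbeats 1600000 in
/-- for a node `β`, with `P` the graph product over `L ∖ {β}`,
`A` the graph product over the link of `β`, and `B = G β`, the canonical
homomorphisms from `P` and from `A × B` into the graph product `G` induce an
isomorphism of the amalgamated free product `P ⋆_A (A × B)` (the pushout of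
the canonical homomorphism `A → P` and of `a ↦ (a,1) : A → A × B`) onto `G`. -/
theorem graph_product_iso_amalgamated_product
    {L : Type} [Finite L] (I : L → L → Prop) (G : L → Type) [∀ α, Group (G α)]
    (hirr : ∀ α, ¬ I α α) (hsym : ∀ α β, I α β → I β α)
    (β : L)
    -- the canonical homomorphism `A → P` induced by the inclusion of the link into `L ∖ {β}`
    (j : GP (restI I (fun α => α ≠ β ∧ I α β)) (restG G (fun α => α ≠ β ∧ I α β)) →*
         GP (restI I (fun α => α ≠ β)) (restG G (fun α => α ≠ β)))
    (hj : ∀ (γ : {α : L // α ≠ β ∧ I α β}) (g : G γ.1),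
      j (gpOf (restI I (fun α => α ≠ β ∧ I α β)) (restG G (fun α => α ≠ β ∧ I α β)) γ g) =
        gpOf (restI I (fun α => α ≠ β)) (restG G (fun α => α ≠ β)) ⟨γ.1, γ.2.1⟩ g)
    -- the two legs of the pushout diagram: `A → P` and `a ↦ (a, 1) : A → A × B`
    (φ : (i : Bool) →
      (GP (restI I (fun α => α ≠ β ∧ I α β)) (restG G (fun α => α ≠ β ∧ I α β)) →*
        amalFam (GP (restI I (fun α => α ≠ β)) (restG G (fun α => α ≠ β)))
          ((GP (restI I (fun α => α ≠ β ∧ I α β)) (restG G (fun α => α ≠ β ∧ I α β))) × G β) i))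
    (hφt : φ true = j)
    (hφf : φ false = (MonoidHom.id _).prod 1) :
    ∃ Φ : Monoid.PushoutI φ ≃* GP I G,
      (∀ (α : {α : L // α ≠ β}) (g : G α.1),
        Φ (Monoid.PushoutI.of (φ := φ) true
            (gpOf (restI I (fun α => α ≠ β)) (restG G (fun α => α ≠ β)) α g)) =
          gpOf I G α.1 g) ∧
      (∀ (γ : {α : L // α ≠ β ∧ I α β}) (g : G γ.1),
        Φ (Monoid.PushoutI.of (φ := φ) false
            (gpOf (restI I (fun α => α ≠ β ∧ I α β)) (restG G (fun α => α ≠ β ∧ I α β)) γ g, 1)) =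
          gpOf I G γ.1 g) ∧
      (∀ b : G β,
        Φ (Monoid.PushoutI.of (φ := φ) false (1, b)) = gpOf I G β b) := by
  classical
  have hPcomm : ∀ (γ δ : {α : L // α ≠ β}) (g : G γ.1) (h' : G δ.1),
      restI I (fun α => α ≠ β) γ δ →
      Commute (gpOf I G γ.1 g) (gpOf I G δ.1 h') :=
    fun γ δ g h' hI => gpOf_commute (I' := I) hI g h'
  have hAcomm : ∀ (γ δ : {α : L // α ≠ β ∧ I α β}) (g : G γ.1) (h' : G δ.1),
      restI I (fun α => α ≠ β ∧ I α β) γ δ →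
      Commute (gpOf I G γ.1 g) (gpOf I G δ.1 h') :=
    fun γ δ g h' hI => gpOf_commute (I' := I) hI g h'
  let fP : GP (restI I (fun α => α ≠ β)) (restG G (fun α => α ≠ β)) →* GP I G :=
    gpLift (fun γ => gpOf I G γ.1) hPcomm
  let fA : GP (restI I (fun α => α ≠ β ∧ I α β)) (restG G (fun α => α ≠ β ∧ I α β)) →* GP I G := gpLift (fun γ => gpOf I G γ.1) hAcomm
  have hfP : ∀ (γ : {α : L // α ≠ β}) (g : G γ.1),
      fP (gpOf (restI I (fun α => α ≠ β)) (restG G (fun α => α ≠ β)) γ g) = gpOf I G γ.1 g := by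
    intro γ g; simp only [fP]; exact gpLift_of (fun γ => gpOf I G γ.1) hPcomm γ g
  have hfA : ∀ (γ : {α : L // α ≠ β ∧ I α β}) (g : G γ.1),
      fA (gpOf (restI I (fun α => α ≠ β ∧ I α β)) (restG G (fun α => α ≠ β ∧ I α β)) γ g) = gpOf I G γ.1 g := by
    intro γ g; simp only [fA]; exact gpLift_of (fun γ => gpOf I G γ.1) hAcomm γ g
  -- elements of A commute with elements of B in G
  have comm : ∀ (a : GP (restI I (fun α => α ≠ β ∧ I α β)) (restG G (fun α => α ≠ β ∧ I α β))) (b : G β), Commute (fA a) (gpOf I G β b) := by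
    intro a b
    have key : ((MulAut.conj (gpOf I G β b)).toMonoidHom.comp fA) = fA := by
      refine gp_hom_ext fun γ x => ?_
      simp only [MonoidHom.comp_apply, hfA, MulEquiv.coe_toMonoidHom, MulAut.conj_apply]
      have hc := (gpOf_commute (I' := I) γ.2.2 x b).symm
      rw [hc.eq, mul_assoc, mul_inv_cancel, mul_one]
    have h3 := DFunLike.congr_fun key a
    simp only [MonoidHom.comp_apply, MulEquiv.coe_toMonoidHom, MulAut.conj_apply] at h3
    rw [mul_inv_eq_iff_eq_mul] at h3
    exact h3.symm
  -- homomorphism from A × B into G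
  let fAB : GP (restI I (fun α => α ≠ β ∧ I α β)) (restG G (fun α => α ≠ β ∧ I α β)) × G β →* GP I G :=
    { toFun := fun p => fA p.1 * gpOf I G β p.2
      map_one' := by simp
      map_mul' := fun p q => by
        simp only [Prod.fst_mul, Prod.snd_mul, map_mul]
        exact ((comm q.1 p.2).symm.mul_mul_mul_comm (fA p.1) (gpOf I G β q.2)).symm }
  have hfAB : ∀ p : GP (restI I (fun α => α ≠ β ∧ I α β)) (restG G (fun α => α ≠ β ∧ I α β)) × G β, fAB p = fA p.1 * gpOf I G β p.2 := fun _ => rfl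
  -- data for the pushout lift
  let f : ∀ i, amalFam (GP (restI I (fun α => α ≠ β)) (restG G (fun α => α ≠ β)))
      (GP (restI I (fun α => α ≠ β ∧ I α β)) (restG G (fun α => α ≠ β ∧ I α β)) × G β) i →* GP I G := fun i => by cases i; exact fAB; exact fP
  have hf : ∀ i, (f i).comp (φ i) = fA := by
    intro i; cases i
    · show fAB.comp (φ false) = fA
      rw [hφf]
      refine gp_hom_ext fun γ x => ?_
      simp only [MonoidHom.comp_apply, MonoidHom.prod_apply, MonoidHom.id_apply,
        MonoidHom.one_apply, hfAB, map_one, mul_one]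
    · show fP.comp (φ true) = fA
      rw [hφt]
      refine gp_hom_ext fun γ x => ?_
      simp only [MonoidHom.comp_apply, hj, hfP, hfA]
  let Φ0 : Monoid.PushoutI φ →* GP I G := Monoid.PushoutI.lift f fA hf
  have hΦ0t : ∀ (γ : {α : L // α ≠ β}) (g : G γ.1),
      Φ0 (Monoid.PushoutI.of (φ := φ) true (gpOf (restI I (fun α => α ≠ β)) (restG G (fun α => α ≠ β)) γ g)) = gpOf I G γ.1 g := by
    intro γ g
    rw [show Φ0 (Monoid.PushoutI.of (φ := φ) true (gpOf (restI I (fun α => α ≠ β)) (restG G (fun α => α ≠ β)) γ g)) =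
      f true (gpOf (restI I (fun α => α ≠ β)) (restG G (fun α => α ≠ β)) γ g) from Monoid.PushoutI.lift_of f fA hf _]
    exact hfP γ g
  have hΦ0f : ∀ p : GP (restI I (fun α => α ≠ β ∧ I α β)) (restG G (fun α => α ≠ β ∧ I α β)) × G β,
      Φ0 (Monoid.PushoutI.of (φ := φ) false p) = fA p.1 * gpOf I G β p.2 := by
    intro p
    rw [show Φ0 (Monoid.PushoutI.of (φ := φ) false p) = f false p from
      Monoid.PushoutI.lift_of f fA hf _]
    rfl
  -- key relation in the pushout
  have hlink : ∀ (γ : {α : L // α ≠ β ∧ I α β}) (g : G γ.1),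
      Monoid.PushoutI.of (φ := φ) true (gpOf (restI I (fun α => α ≠ β)) (restG G (fun α => α ≠ β)) (⟨γ.1, γ.2.1⟩ : {α : L // α ≠ β}) g) =
      Monoid.PushoutI.of (φ := φ) false (gpOf (restI I (fun α => α ≠ β ∧ I α β)) (restG G (fun α => α ≠ β ∧ I α β)) γ g, 1) := by
    intro γ g
    calc Monoid.PushoutI.of (φ := φ) true
          (gpOf (restI I (fun α => α ≠ β)) (restG G (fun α => α ≠ β)) (⟨γ.1, γ.2.1⟩ : {α : L // α ≠ β}) g)
        = Monoid.PushoutI.of (φ := φ) true (j (gpOf (restI I (fun α => α ≠ β ∧ I α β)) (restG G (fun α => α ≠ β ∧ I α β)) γ g)) :=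
          congrArg (Monoid.PushoutI.of (φ := φ) true) (hj γ g).symm
      _ = Monoid.PushoutI.of (φ := φ) true (φ true (gpOf (restI I (fun α => α ≠ β ∧ I α β)) (restG G (fun α => α ≠ β ∧ I α β)) γ g)) :=
          congrArg (Monoid.PushoutI.of (φ := φ) true)
            (DFunLike.congr_fun hφt (gpOf (restI I (fun α => α ≠ β ∧ I α β)) (restG G (fun α => α ≠ β ∧ I α β)) γ g)).symm
      _ = Monoid.PushoutI.base φ (gpOf (restI I (fun α => α ≠ β ∧ I α β)) (restG G (fun α => α ≠ β ∧ I α β)) γ g) := Monoid.PushoutI.of_apply_eq_base (φ := φ) true _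
      _ = Monoid.PushoutI.of (φ := φ) false (φ false (gpOf (restI I (fun α => α ≠ β ∧ I α β)) (restG G (fun α => α ≠ β ∧ I α β)) γ g)) :=
          (Monoid.PushoutI.of_apply_eq_base (φ := φ) false _).symm
      _ = Monoid.PushoutI.of (φ := φ) false (gpOf (restI I (fun α => α ≠ β ∧ I α β)) (restG G (fun α => α ≠ β ∧ I α β)) γ g, 1) :=
          congrArg (Monoid.PushoutI.of (φ := φ) false)
            (DFunLike.congr_fun hφf (gpOf (restI I (fun α => α ≠ β ∧ I α β)) (restG G (fun α => α ≠ β ∧ I α β)) γ g))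
  -- the inverse homomorphism
  let e : ∀ α : L, G α →* Monoid.PushoutI φ := fun α =>
    if h : α = β then
      (Monoid.PushoutI.of (φ := φ) false).comp
        ((MonoidHom.prod 1 (MonoidHom.id (G β))).comp (gpCastHom (G' := G) h))
    else (Monoid.PushoutI.of (φ := φ) true).comp (gpOf (restI I (fun α => α ≠ β)) (restG G (fun α => α ≠ β)) ⟨α, h⟩)
  have he_ne : ∀ (α : L) (h : α ≠ β) (g : G α),
      e α g = Monoid.PushoutI.of (φ := φ) true
        (gpOf (restI I (fun α => α ≠ β)) (restG G (fun α => α ≠ β)) (⟨α, h⟩ : {α : L // α ≠ β}) g) := by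
    intro α h g; simp only [e, dif_neg h]; rfl
  have he_eq : ∀ b : G β, e β b = Monoid.PushoutI.of (φ := φ) false (1, b) := by
    intro b; simp only [e, dif_pos rfl]; rfl
  -- commutation needed to define the inverse
  have hcomm : ∀ (α α' : L) (g : G α) (g' : G α'), I α α' →
      Commute (e α g) (e α' g') := by
    have main : ∀ (α' : L) (hne : α' ≠ β) (hI : I α' β) (g' : G α') (b : G β),
        Commute (e α' g') (e β b) := by
      intro α' hne hI g' b
      rw [he_ne α' hne g', he_eq b, hlink ⟨α', hne, hI⟩ g']
      have hcp : ((gpOf (restI I (fun α => α ≠ β ∧ I α β)) (restG G (fun α => α ≠ β ∧ I α β)) (⟨α', hne, hI⟩ : {α : L // α ≠ β ∧ I α β}) g', (1 : G β)) :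
            GP (restI I (fun α => α ≠ β ∧ I α β)) (restG G (fun α => α ≠ β ∧ I α β)) × G β) * ((1 : GP (restI I (fun α => α ≠ β ∧ I α β)) (restG G (fun α => α ≠ β ∧ I α β))), b) =
          (((1 : GP (restI I (fun α => α ≠ β ∧ I α β)) (restG G (fun α => α ≠ β ∧ I α β))), b) : GP (restI I (fun α => α ≠ β ∧ I α β)) (restG G (fun α => α ≠ β ∧ I α β)) × G β) *
            (gpOf (restI I (fun α => α ≠ β ∧ I α β)) (restG G (fun α => α ≠ β ∧ I α β)) (⟨α', hne, hI⟩ : {α : L // α ≠ β ∧ I α β}) g', (1 : G β)) := by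
        simp [Prod.ext_iff]
      exact Commute.map hcp (Monoid.PushoutI.of (φ := φ) false)
    intro α α' g g' hI
    by_cases hα : α = β
    · subst hα
      by_cases hα' : α' = α
      · exact absurd (hα' ▸ hI) (hirr α)
      · exact (main α' hα' (hsym _ _ hI) g' g).symm
    · by_cases hα' : α' = β
      · subst hα'; exact main α hα hI g g'
      · rw [he_ne α hα g, he_ne α' hα' g']
        exact ((gpOf_commute (I' := restI I (fun α => α ≠ β))
            (G' := restG G (fun α => α ≠ β)) (α := ⟨α, hα⟩) (β := ⟨α', hα'⟩) hI g g')).map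
          (Monoid.PushoutI.of (φ := φ) true)
  let Ψ : GP I G →* Monoid.PushoutI φ := gpLift e hcomm
  have hΨ : ∀ (α : L) (g : G α), Ψ (gpOf I G α g) = e α g := by
    intro α g; simp only [Ψ]; exact gpLift_of e hcomm α g
  -- the two compositions are the identity
  have h1 : Φ0.comp Ψ = MonoidHom.id (GP I G) := by
    refine gp_hom_ext fun α g => ?_
    simp only [MonoidHom.comp_apply, MonoidHom.id_apply, hΨ]
    by_cases h : α = β
    · subst h
      rw [he_eq, hΦ0f]
      simp
    · rw [he_ne α h, hΦ0t]
  have hBsingle : ∀ b : G β, Ψ (Φ0 (Monoid.PushoutI.of (φ := φ) false (1, b))) =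
      Monoid.PushoutI.of (φ := φ) false (1, b) := by
    intro b
    rw [hΦ0f]
    simp only [map_one, one_mul, hΨ, he_eq]
  have hAsingle : ∀ a : GP (restI I (fun α => α ≠ β ∧ I α β)) (restG G (fun α => α ≠ β ∧ I α β)), Ψ (Φ0 (Monoid.PushoutI.of (φ := φ) false (a, 1))) =
      Monoid.PushoutI.of (φ := φ) false (a, 1) := by
    have haux : ((Ψ.comp Φ0).comp (Monoid.PushoutI.of (φ := φ) false)).comp
        (MonoidHom.inl (GP (restI I (fun α => α ≠ β ∧ I α β)) (restG G (fun α => α ≠ β ∧ I α β))) (G β)) =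
        (Monoid.PushoutI.of (φ := φ) false).comp (MonoidHom.inl (GP (restI I (fun α => α ≠ β ∧ I α β)) (restG G (fun α => α ≠ β ∧ I α β))) (G β)) := by
      refine gp_hom_ext fun γ x => ?_
      calc Ψ (Φ0 (Monoid.PushoutI.of (φ := φ) false
              ((MonoidHom.inl (GP (restI I (fun α => α ≠ β ∧ I α β))
                (restG G (fun α => α ≠ β ∧ I α β))) (G β)) (gpOf (restI I (fun α => α ≠ β ∧ I α β)) (restG G (fun α => α ≠ β ∧ I α β)) γ x))))
          = Ψ (fA (gpOf (restI I (fun α => α ≠ β ∧ I α β)) (restG G (fun α => α ≠ β ∧ I α β)) γ x) * gpOf I G β 1) := congrArg Ψ (hΦ0f (gpOf (restI I (fun α => α ≠ β ∧ I α β)) (restG G (fun α => α ≠ β ∧ I α β)) γ x, 1))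
        _ = Ψ (gpOf I G γ.1 x) := by rw [map_one, mul_one, hfA γ x]
        _ = e γ.1 x := hΨ γ.1 x
        _ = Monoid.PushoutI.of (φ := φ) true
              (gpOf (restI I (fun α => α ≠ β)) (restG G (fun α => α ≠ β)) (⟨γ.1, γ.2.1⟩ : {α : L // α ≠ β}) x) := he_ne γ.1 γ.2.1 x
        _ = Monoid.PushoutI.of (φ := φ) false (gpOf (restI I (fun α => α ≠ β ∧ I α β)) (restG G (fun α => α ≠ β ∧ I α β)) γ x, 1) := hlink γ x
    intro a
    have := DFunLike.congr_fun haux a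
    exact this
  have hall : ∀ p : GP (restI I (fun α => α ≠ β ∧ I α β)) (restG G (fun α => α ≠ β ∧ I α β)) × G β, Ψ (Φ0 (Monoid.PushoutI.of (φ := φ) false p)) =
      Monoid.PushoutI.of (φ := φ) false p := by
    rintro ⟨a, b⟩
    have hsplit : ((a, b) : GP (restI I (fun α => α ≠ β ∧ I α β)) (restG G (fun α => α ≠ β ∧ I α β)) × G β) = (a, 1) * (1, b) := by simp
    have hm : Monoid.PushoutI.of (φ := φ) false (((a, 1) * (1, b) : GP (restI I (fun α => α ≠ β ∧ I α β)) (restG G (fun α => α ≠ β ∧ I α β)) × G β)) =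
        Monoid.PushoutI.of (φ := φ) false (a, 1) * Monoid.PushoutI.of (φ := φ) false (1, b) :=
      map_mul (Monoid.PushoutI.of (φ := φ) false) (a, 1) (1, b)
    rw [hsplit, hm, map_mul, map_mul, hAsingle, hBsingle]
  have h2 : Ψ.comp Φ0 = MonoidHom.id (Monoid.PushoutI φ) := by
    refine Monoid.PushoutI.hom_ext_nonempty fun i => ?_
    cases i
    · refine MonoidHom.ext fun p => ?_
      simp only [MonoidHom.comp_apply, MonoidHom.id_apply]
      exact hall p
    · refine gp_hom_ext fun γ x => ?_
      calc Ψ (Φ0 (Monoid.PushoutI.of (φ := φ) true (gpOf (restI I (fun α => α ≠ β)) (restG G (fun α => α ≠ β)) γ x)))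
          = Ψ (gpOf I G γ.1 x) := congrArg Ψ (hΦ0t γ x)
        _ = e γ.1 x := hΨ γ.1 x
        _ = Monoid.PushoutI.of (φ := φ) true
              (gpOf (restI I (fun α => α ≠ β)) (restG G (fun α => α ≠ β)) (⟨γ.1, γ.2⟩ : {α : L // α ≠ β}) x) := he_ne γ.1 γ.2 x
  refine ⟨Φ0.toMulEquiv Ψ h2 h1, ?_, ?_, ?_⟩
  · intro α g
    exact hΦ0t α g
  · intro γ g
    have h := hΦ0f (gpOf (restI I (fun α => α ≠ β ∧ I α β)) (restG G (fun α => α ≠ β ∧ I α β)) γ g, 1)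
    simp only [map_one, mul_one, hfA] at h
    exact h
  · intro b
    have h := hΦ0f (1, b)
    simp only [map_one, one_mul] at h
    exact h
end

section
/- Let B be a group, N a set with a distinguished element 0 ∈ N, and F = ⋆_{ν∈N} B^{(ν)} the free product of copies of B with canonical injections ι_ν : B → F. Let φ : F → B be the homomorphism with φ ∘ ι_ν = id_B for all ν ∈ N, and K = ker(φ). Let X = (N ∖ {0}) × (B ∖ {1}) and let ξ be the homomorphism from the free group F(X) on X to F determined by ξ(ν, g) = ι_ν(g) · ι_0(g)⁻¹. Then ξ is injective and its image is contained in K; that is, the elements ι_ν(g) ι_0(g)⁻¹ for ν ≠ 0 and g ≠ 1 form a basis of a free subgroup of K. -/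
open Monoid
open scoped Classical

section aux
variable (B : Type) [Group B] (N : Type) (n0 : N)

private abbrev XX := {ν : N // ν ≠ n0} × {b : B // b ≠ 1}

private noncomputable def xElt (ν : {ν : N // ν ≠ n0}) (c : B) : FreeGroup (XX B N n0) :=
  if h : c = 1 then 1 else FreeGroup.of (ν, ⟨c, h⟩)

private lemma xElt_one (ν : {ν : N // ν ≠ n0}) : xElt B N n0 ν 1 = 1 := dif_pos rfl

private lemma xElt_ne (ν : {ν : N // ν ≠ n0}) (c : B) (h : c ≠ 1) :
    xElt B N n0 ν c = FreeGroup.of (ν, ⟨c, h⟩) := dif_neg h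

private noncomputable def L (b : B) : FreeGroup (XX B N n0) →* FreeGroup (XX B N n0) :=
  FreeGroup.lift fun p => (xElt B N n0 p.1 b)⁻¹ * xElt B N n0 p.1 (b * p.2.1)

private lemma L_xElt (b : B) (ν : {ν : N // ν ≠ n0}) (c : B) :
    L B N n0 b (xElt B N n0 ν c) = (xElt B N n0 ν b)⁻¹ * xElt B N n0 ν (b * c) := by
  by_cases h : c = 1
  · subst h
    simp [xElt_one]
  · rw [xElt_ne B N n0 ν c h, L, FreeGroup.lift_apply_of]

private lemma L_comp (a b : B) :
    (L B N n0 a).comp (L B N n0 b) = L B N n0 (a * b) := by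
  apply FreeGroup.ext_hom
  intro p
  simp only [MonoidHom.comp_apply, L, FreeGroup.lift_apply_of]
  rw [map_mul, map_inv]
  rw [show FreeGroup.lift (fun p => (xElt B N n0 p.1 a)⁻¹ * xElt B N n0 p.1 (a * p.2.1))
      = L B N n0 a from rfl]
  rw [L_xElt, L_xElt]
  group

private lemma L_one : L B N n0 1 = MonoidHom.id _ := by
  apply FreeGroup.ext_hom
  intro p
  simp only [L, FreeGroup.lift_apply_of, MonoidHom.id_apply, xElt_one, inv_one, one_mul]
  rw [xElt_ne B N n0 p.1 p.2.1 p.2.2]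

private noncomputable def act : B →* MulAut (FreeGroup (XX B N n0)) where
  toFun b :=
    { toFun := L B N n0 b
      invFun := L B N n0 b⁻¹
      left_inv := fun x => by
        rw [← MonoidHom.comp_apply, L_comp, inv_mul_cancel, L_one, MonoidHom.id_apply]
      right_inv := fun x => by
        rw [← MonoidHom.comp_apply, L_comp, mul_inv_cancel, L_one, MonoidHom.id_apply]
      map_mul' := map_mul _ }
  map_one' := by
    ext x
    simp [L_one]
  map_mul' a b := by
    ext x
    change L B N n0 (a * b) x = L B N n0 a (L B N n0 b x)
    rw [← L_comp, MonoidHom.comp_apply]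

private noncomputable def yElt (ν : N) (b : B) : FreeGroup (XX B N n0) :=
  if h : ν = n0 then 1 else xElt B N n0 ⟨ν, h⟩ b

private lemma y_mul (ν : N) (a b : B) :
    yElt B N n0 ν a * L B N n0 a (yElt B N n0 ν b) = yElt B N n0 ν (a * b) := by
  by_cases h : ν = n0
  · simp [yElt, h]
  · simp only [yElt, dif_neg h, L_xElt]
    group

private noncomputable def homν (ν : N) : B →* SemidirectProduct (FreeGroup (XX B N n0)) B (act B N n0) :=
  MonoidHom.mk' (fun b => ⟨yElt B N n0 ν b, b⟩) (by
    intro a b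
    ext <;> simp [SemidirectProduct.mul_left, SemidirectProduct.mul_right]
    · exact (y_mul B N n0 ν a b).symm)

private noncomputable def ψ : CoprodI (fun _ : N => B) →* SemidirectProduct (FreeGroup (XX B N n0)) B (act B N n0) :=
  CoprodI.lift (homν B N n0)

end aux

/-- Let `B` be a group, `N` a set with a distinguished element `n0`,
`F = ⋆_{ν∈N} B` the free product of copies of `B`, `φ : F →* B` the homomorphism
restricting to the identity on each copy, and `K = ker φ`.  The homomorphism `ξ`
from the free group on `X = (N ∖ {n0}) × (B ∖ {1})` to `F` sending `(ν, g)` to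
`ι_ν(g) · ι_{n0}(g)⁻¹` is injective with image contained in `K`; i.e. these
elements form a basis of a free subgroup of `K`. -/
theorem free_basis_in_kernel_of_free_product_of_copies
    (B : Type) [Group B] (N : Type) (n0 : N)
    (φ : Monoid.CoprodI (fun _ : N => B) →* B)
    (hφ : ∀ (ν : N) (b : B), φ (Monoid.CoprodI.of (i := ν) b) = b)
    (ξ : FreeGroup ({ν : N // ν ≠ n0} × {b : B // b ≠ 1}) →*
         Monoid.CoprodI (fun _ : N => B))
    (hξ : ∀ x : {ν : N // ν ≠ n0} × {b : B // b ≠ 1},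
      ξ (FreeGroup.of x) =
        Monoid.CoprodI.of (i := x.1.1) x.2.1 *
        (Monoid.CoprodI.of (i := n0) x.2.1)⁻¹) :
    Function.Injective ξ ∧ ∀ y, ξ y ∈ φ.ker := by
  constructor
  · -- compose with ψ to get inl
    have key : (ψ B N n0).comp ξ = SemidirectProduct.inl := by
      apply FreeGroup.ext_hom
      intro p
      simp only [MonoidHom.comp_apply, hξ, map_mul, map_inv]
      rw [show (ψ B N n0) (Monoid.CoprodI.of (i := p.1.1) p.2.1) = homν B N n0 p.1.1 p.2.1 from
        Monoid.CoprodI.lift_of _ _,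
        show (ψ B N n0) (Monoid.CoprodI.of (i := n0) p.2.1) = homν B N n0 n0 p.2.1 from
        Monoid.CoprodI.lift_of _ _]
      ext
      · simp [homν, yElt, xElt_ne B N n0 p.1 p.2.1 p.2.2, SemidirectProduct.mul_left,
          SemidirectProduct.inv_left, xElt_one, p.1.2]
      · simp [homν, SemidirectProduct.mul_right, SemidirectProduct.inv_right]
    intro a b h
    have : (ψ B N n0).comp ξ a = (ψ B N n0).comp ξ b := by
      simp [MonoidHom.comp_apply, h]
    rw [key] at this
    exact SemidirectProduct.inl_injective this
  · -- kernel
    intro y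
    have : φ.comp ξ = 1 := by
      apply FreeGroup.ext_hom
      intro p
      simp [hξ, hφ]
    have := DFunLike.congr_fun this y
    simpa [MonoidHom.mem_ker] using this
end

section
/- Every word w ∈ Γ* represents the same element of G as some reduced word; and two reduced words u, v ∈ Γ* represent the same element of G if and only if u ≡ v. -/
variable {L : Type} (I : L → L → Prop) (G : L → Type) [∀ α, Group (G α)]

/- ============ auxiliary development ============ -/
namespace GPAux

local notation "W" => List (Letter L G)

variable {I G}

section basic

theorem eqv_refl (u : W) : TraceEquiv I G u u := Relation.EqvGen.refl u

theorem eqv_symm {u v : W} (h : TraceEquiv I G u v) : TraceEquiv I G v u :=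
  Relation.EqvGen.symm _ _ h

theorem eqv_trans {u v w : W} (h : TraceEquiv I G u v) (h' : TraceEquiv I G v w) :
    TraceEquiv I G u w := Relation.EqvGen.trans _ _ _ h h'

theorem eqv_of_step {u v : W} (h : TraceStep I G u v) : TraceEquiv I G u v :=
  Relation.EqvGen.rel _ _ h

theorem step_symm (hsym : ∀ α β, I α β → I β α) {u v : W} (h : TraceStep I G u v) : TraceStep I G v u := by
  cases h with
  | swap p q a b hI => exact TraceStep.swap p q b a (hsym _ _ hI)

theorem rtg_symm (hsym : ∀ α β, I α β → I β α) {u v : W}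
    (h : Relation.ReflTransGen (TraceStep I G) u v) :
    Relation.ReflTransGen (TraceStep I G) v u := by
  induction h with
  | refl => exact Relation.ReflTransGen.refl
  | tail _ hs ih => exact Relation.ReflTransGen.head (step_symm hsym hs) ih

theorem eqv_iff_rtg (hsym : ∀ α β, I α β → I β α) {u v : W} :
    TraceEquiv I G u v ↔ Relation.ReflTransGen (TraceStep I G) u v := by
  constructor
  · intro h
    induction h with
    | rel a b h => exact Relation.ReflTransGen.single h
    | refl a => exact Relation.ReflTransGen.refl
    | symm a b _ ih => exact rtg_symm hsym ih
    | trans a b c _ _ ih1 ih2 => exact ih1.trans ih2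
  · intro h
    induction h with
    | refl => exact eqv_refl u
    | tail _ hs ih => exact eqv_trans ih (eqv_of_step hs)

theorem step_cons {u v : W} (c : Letter L G) (h : TraceStep I G u v) :
    TraceStep I G (c :: u) (c :: v) := by
  cases h with
  | swap p q a b hI => exact TraceStep.swap (c :: p) q a b hI

theorem eqv_cons {u v : W} (c : Letter L G) (h : TraceEquiv I G u v) :
    TraceEquiv I G (c :: u) (c :: v) := by
  induction h with
  | rel a b h => exact eqv_of_step (step_cons c h)
  | refl a => exact eqv_refl _
  | symm a b _ ih => exact eqv_symm ih
  | trans a b c' _ _ ih1 ih2 => exact eqv_trans ih1 ih2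

theorem eqv_append_left (x : W) {u v : W} (h : TraceEquiv I G u v) :
    TraceEquiv I G (x ++ u) (x ++ v) := by
  induction x with
  | nil => exact h
  | cons c x ih => exact eqv_cons c ih

theorem step_append_right {u v : W} (y : W) (h : TraceStep I G u v) :
    TraceStep I G (u ++ y) (v ++ y) := by
  cases h with
  | swap p q a b hI =>
      have e1 : (p ++ a :: b :: q) ++ y = p ++ a :: b :: (q ++ y) := by simp
      have e2 : (p ++ b :: a :: q) ++ y = p ++ b :: a :: (q ++ y) := by simp
      rw [e1, e2]
      exact TraceStep.swap p (q ++ y) a b hI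

theorem eqv_append_right {u v : W} (y : W) (h : TraceEquiv I G u v) :
    TraceEquiv I G (u ++ y) (v ++ y) := by
  induction h with
  | rel a b h => exact eqv_of_step (step_append_right y h)
  | refl a => exact eqv_refl _
  | symm a b _ ih => exact eqv_symm ih
  | trans a b c _ _ ih1 ih2 => exact eqv_trans ih1 ih2

theorem swap_eqv {a b : Letter L G} (hI : I a.1 b.1) (t : W) :
    TraceEquiv I G (a :: b :: t) (b :: a :: t) :=
  eqv_of_step (TraceStep.swap [] t a b hI)

/-- bubble a letter to the front through an independent prefix -/
theorem bubble {x : W} {ℓ : Letter L G} (h : ∀ c ∈ x, I c.1 ℓ.1) (y : W) :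
    TraceEquiv I G (x ++ ℓ :: y) (ℓ :: (x ++ y)) := by
  induction x with
  | nil => exact eqv_refl _
  | cons c x ih =>
      have h1 : TraceEquiv I G (c :: (x ++ ℓ :: y)) (c :: ℓ :: (x ++ y)) :=
        eqv_cons c (ih (fun d hd => h d (List.mem_cons_of_mem _ hd)))
      exact eqv_trans h1 (swap_eqv (h c List.mem_cons_self) _)

end basic

section bad

variable (I G)

/-- `Occ β w`: `w = x ++ b :: y` with `b ∈ Γ_β` and `x ∈ I(β)`. -/
inductive Occ (β : L) : List (Letter L G) → Prop
  | found (b : Letter L G) (y : List (Letter L G)) (h : b.1 = β) : Occ β (b :: y)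
  | step (c : Letter L G) (w : List (Letter L G)) (h : I c.1 β) (hw : Occ β w) :
      Occ β (c :: w)

/-- inductive characterization of "having a bad factor". -/
inductive Bad : List (Letter L G) → Prop
  | here (b : Letter L G) (u : List (Letter L G)) (h : Occ I G b.1 u) : Bad (b :: u)
  | there (c : Letter L G) (w : List (Letter L G)) (h : Bad w) : Bad (c :: w)

/-- `LeadS a w r`: `w = x ++ a :: y` with `x ∈ I(a.1)` and `r = x ++ y`. -/
inductive LeadS (a : Letter L G) : List (Letter L G) → List (Letter L G) → Prop
  | head (y : List (Letter L G)) : LeadS a (a :: y) y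
  | cons (c : Letter L G) (w r : List (Letter L G)) (h : I c.1 a.1) (hw : LeadS a w r) :
      LeadS a (c :: w) (c :: r)

variable {I G}

theorem occ_swap (hsym : ∀ α β, I α β → I β α) {β : L} {c d : Letter L G} {q : W} (hcd : I c.1 d.1)
    (h : Occ I G β (c :: d :: q)) : Occ I G β (d :: c :: q) := by
  cases h with
  | found _ _ hb =>
      exact Occ.step d _ (by rw [← hb]; exact hsym _ _ hcd) (Occ.found c q hb)
  | step _ _ hc hw =>
      cases hw with
      | found _ _ hb => exact Occ.found d _ hb
      | step _ _ hd hq => exact Occ.step d _ hd (Occ.step c _ hc hq)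

theorem occ_pre (hsym : ∀ α β, I α β → I β α) {β : L} {c d : Letter L G} {q : W} (p : W) (hcd : I c.1 d.1)
    (h : Occ I G β (p ++ c :: d :: q)) : Occ I G β (p ++ d :: c :: q) := by
  induction p with
  | nil => exact occ_swap hsym hcd h
  | cons e p ih =>
      cases h with
      | found _ _ hb => exact Occ.found e _ hb
      | step _ _ he hw => exact Occ.step e _ he (ih hw)

theorem bad_swap (hsym : ∀ α β, I α β → I β α) {c d : Letter L G} {q : W} (hcd : I c.1 d.1)
    (h : Bad I G (c :: d :: q)) : Bad I G (d :: c :: q) := by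
  cases h with
  | here _ _ hocc =>
      cases hocc with
      | found _ _ hb => exact Bad.here d _ (Occ.found c q hb.symm)
      | step _ _ hd hq => exact Bad.there d _ (Bad.here c _ hq)
  | there _ _ hbad =>
      cases hbad with
      | here _ _ hocc => exact Bad.here d _ (Occ.step c _ hcd hocc)
      | there _ _ hb => exact Bad.there d _ (Bad.there c _ hb)

theorem bad_pre (hsym : ∀ α β, I α β → I β α) {c d : Letter L G} {q : W} (p : W) (hcd : I c.1 d.1)
    (h : Bad I G (p ++ c :: d :: q)) : Bad I G (p ++ d :: c :: q) := by
  induction p with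
  | nil => exact bad_swap hsym hcd h
  | cons e p ih =>
      cases h with
      | here _ _ hocc => exact Bad.here e _ (occ_pre hsym p hcd hocc)
      | there _ _ hb => exact Bad.there e _ (ih hb)

theorem bad_eqv (hsym : ∀ α β, I α β → I β α) {u v : W} (h : TraceEquiv I G u v) : Bad I G u ↔ Bad I G v := by
  induction h with
  | rel a b hs =>
      cases hs with
      | swap p q a b hI =>
          exact ⟨fun hb => bad_pre hsym p hI hb,
                 fun hb => bad_pre hsym p (hsym _ _ hI) hb⟩
  | refl a => exact Iff.rfl
  | symm a b _ ih => exact ih.symm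
  | trans a b c _ _ ih1 ih2 => exact ih1.trans ih2

theorem not_bad_cons {c : Letter L G} {w : W} (h : ¬ Bad I G (c :: w)) : ¬ Bad I G w :=
  fun hb => h (Bad.there c w hb)

theorem bad_cons_congr {α : L} {g g' : {x : G α // x ≠ 1}} {w : W}
    (h : Bad I G ((⟨α, g⟩ : Letter L G) :: w)) : Bad I G ((⟨α, g'⟩ : Letter L G) :: w) := by
  cases h with
  | here _ _ hocc => exact Bad.here _ _ hocc
  | there _ _ hb => exact Bad.there _ _ hb

end bad

section lead

theorem leadS_eqv {a : Letter L G} {w r : W} (h : LeadS I G a w r) :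
    TraceEquiv I G w (a :: r) := by
  induction h with
  | head y => exact eqv_refl _
  | cons c w r hI _ ih => exact eqv_trans (eqv_cons c ih) (swap_eqv hI r)

theorem leadS_swap (hsym : ∀ α β, I α β → I β α) {a c d : Letter L G} {q r : W} (hcd : I c.1 d.1)
    (h : LeadS I G a (c :: d :: q) r) :
    ∃ r', LeadS I G a (d :: c :: q) r' ∧ TraceEquiv I G r r' := by
  cases h with
  | head => exact ⟨d :: q, LeadS.cons d _ _ (hsym _ _ hcd) (LeadS.head q), eqv_refl _⟩
  | cons _ _ r₀ hc hw =>
      cases hw with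
      | head => exact ⟨c :: q, LeadS.head _, eqv_refl _⟩
      | cons _ _ r₁ hd hq =>
          exact ⟨d :: c :: r₁, LeadS.cons d _ _ hd (LeadS.cons c _ _ hc hq),
            eqv_of_step (TraceStep.swap [] r₁ c d hcd)⟩

theorem leadS_step (hsym : ∀ α β, I α β → I β α) {a : Letter L G} {w w' r : W} (hs : TraceStep I G w w')
    (h : LeadS I G a w r) :
    ∃ r', LeadS I G a w' r' ∧ TraceEquiv I G r r' := by
  cases hs with
  | swap p q c d hI =>
      induction p generalizing r with
      | nil => exact leadS_swap hsym hI h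
      | cons e p ih =>
          cases h with
          | head =>
              exact ⟨p ++ d :: c :: q, LeadS.head _,
                eqv_of_step (TraceStep.swap p q c d hI)⟩
          | cons _ _ r₀ he hw =>
              obtain ⟨r', hr', he'⟩ := ih hw
              exact ⟨e :: r', LeadS.cons e _ _ he hr', eqv_cons e he'⟩

theorem leadS_trans_eqv (hsym : ∀ α β, I α β → I β α) {a : Letter L G} {w w' r : W} (he : TraceEquiv I G w w')
    (h : LeadS I G a w r) :
    ∃ r', LeadS I G a w' r' ∧ TraceEquiv I G r r' := by
  rw [eqv_iff_rtg hsym] at he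
  induction he with
  | refl => exact ⟨r, h, eqv_refl _⟩
  | tail _ hs ih =>
      obtain ⟨r', hr', he'⟩ := ih
      obtain ⟨r'', hr'', he''⟩ := leadS_step hsym hs hr'
      exact ⟨r'', hr'', eqv_trans he' he''⟩

theorem leadS_unique (hirr : ∀ α, ¬ I α α) {a a' : Letter L G} {w r r' : W}
    (h : LeadS I G a w r) (h' : LeadS I G a' w r') (hα : a.1 = a'.1) :
    a = a' ∧ TraceEquiv I G r r' := by
  induction h generalizing r' with
  | head y =>
      cases h' with
      | head => exact ⟨rfl, eqv_refl _⟩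
      | cons _ _ _ hc _ => exact absurd (hα ▸ hc) (hirr _)
  | cons c w₀ r₀ hc hw ih =>
      cases h' with
      | head => exact absurd (hα ▸ hc) (hirr _)
      | cons _ _ r₁ hc' hw' =>
          obtain ⟨haa, hrr⟩ := ih hw'
          exact ⟨haa, eqv_cons c hrr⟩

theorem eqv_cancel (hsym : ∀ α β, I α β → I β α) (hirr : ∀ α, ¬ I α α) {a a' : Letter L G} {u v : W}
    (h : TraceEquiv I G (a :: u) (a' :: v)) (hα : a.1 = a'.1) :
    a = a' ∧ TraceEquiv I G u v := by
  obtain ⟨r', hr', he'⟩ := leadS_trans_eqv hsym h (LeadS.head u)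
  cases hr' with
  | head => exact ⟨rfl, he'⟩
  | cons _ _ _ hc _ => exact absurd (hα ▸ hc) (hirr _)

/-- `w` has a leading `Γ_α`-letter. -/
def HasLead (I : L → L → Prop) (G : L → Type) [∀ α, Group (G α)] (α : L)
    (w : List (Letter L G)) : Prop :=
  ∃ (b : {g : G α // g ≠ 1}) (r : List (Letter L G)), LeadS I G (⟨α, b⟩ : Letter L G) w r

theorem hasLead_eqv (hsym : ∀ α β, I α β → I β α) {α : L} {w w' : W} (he : TraceEquiv I G w w')
    (h : HasLead I G α w) : HasLead I G α w' := by
  obtain ⟨b, r, hr⟩ := h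
  obtain ⟨r', hr', _⟩ := leadS_trans_eqv hsym he hr
  exact ⟨b, r', hr'⟩

theorem occ_hasLead {β : L} {w : W} (h : Occ I G β w) : HasLead I G β w := by
  induction h with
  | found b y hb => exact ⟨hb ▸ b.2, y, by cases b; cases hb; exact LeadS.head y⟩
  | step c w hc _ ih =>
      obtain ⟨b, r, hr⟩ := ih
      exact ⟨b, c :: r, LeadS.cons c _ _ hc hr⟩

theorem not_hasLead_tail (hsym : ∀ α β, I α β → I β α) {a : Letter L G} {u : W} (h : ¬ Bad I G (a :: u)) :
    ¬ HasLead I G a.1 u := by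
  rintro ⟨b, r, hr⟩
  have he : TraceEquiv I G (a :: u) (a :: (⟨a.1, b⟩ : Letter L G) :: r) :=
    eqv_cons a (leadS_eqv hr)
  have hb : Bad I G (a :: (⟨a.1, b⟩ : Letter L G) :: r) :=
    Bad.here a _ (Occ.found _ r rfl)
  exact h ((bad_eqv hsym he).mpr hb)

theorem not_bad_cons_of_not_hasLead {α : L} {g : {x : G α // x ≠ 1}} {w : W}
    (hw : ¬ Bad I G w) (hl : ¬ HasLead I G α w) :
    ¬ Bad I G ((⟨α, g⟩ : Letter L G) :: w) := by
  intro hb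
  cases hb with
  | here _ _ hocc => exact hl (occ_hasLead hocc)
  | there _ _ h => exact hw h

end lead

section bridge

theorem occ_iff {β : L} {w : W} :
    Occ I G β w ↔ ∃ (b' : {g : G β // g ≠ 1}) (u y : W),
      w = u ++ (⟨β, b'⟩ : Letter L G) :: y ∧ IndepWord I G β u := by
  constructor
  · intro h
    induction h with
    | found b y hb =>
        refine ⟨hb ▸ b.2, [], y, ?_, fun c hc => absurd hc List.not_mem_nil⟩
        cases b; cases hb; rfl
    | step c w hc _ ih =>
        obtain ⟨b', u, y, rfl, hu⟩ := ih
        refine ⟨b', c :: u, y, rfl, ?_⟩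
        intro d hd
        rcases List.mem_cons.mp hd with h | h
        · exact h ▸ hc
        · exact hu d h
  · rintro ⟨b', u, y, rfl, hu⟩
    induction u with
    | nil => exact Occ.found _ y rfl
    | cons c u ih =>
        exact Occ.step c _ (hu c List.mem_cons_self)
          (ih (fun d hd => hu d (List.mem_cons_of_mem _ hd)))

theorem bad_iff {w : W} :
    Bad I G w ↔ ¬ Reduced I G w := by
  rw [Reduced, not_not]
  constructor
  · intro h
    induction h with
    | here b u hocc =>
        obtain ⟨b', u', y, rfl, hu⟩ := occ_iff.mp hocc
        exact ⟨b.1, b.2, b', [], u', y, rfl, hu⟩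
    | there c w _ ih =>
        obtain ⟨β, b, b', x, u, y, rfl, hu⟩ := ih
        exact ⟨β, b, b', c :: x, u, y, rfl, hu⟩
  · rintro ⟨β, b, b', x, u, y, rfl, hu⟩
    induction x with
    | nil => exact Bad.here _ _ (occ_iff.mpr ⟨b', u, y, rfl, hu⟩)
    | cons c x ih => exact Bad.there c _ ih

theorem reduced_iff {w : W} : Reduced I G w ↔ ¬ Bad I G w := by
  rw [bad_iff, not_not]

theorem reduced_nil : Reduced I G ([] : W) := by
  rw [reduced_iff]
  intro h
  cases h

end bridge

section eval

theorem evalWord_append (u v : W) :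
    evalWord I G (u ++ v) = evalWord I G u * evalWord I G v := by
  simp [evalWord]

theorem evalWord_cons (a : Letter L G) (u : W) :
    evalWord I G (a :: u) = gpOf I G a.1 a.2.1 * evalWord I G u := by
  simp [evalWord]

theorem evalWord_nil : evalWord I G ([] : W) = 1 := rfl

theorem gpOf_comm {α β : L} (hI : I α β) (g : G α) (h : G β) :
    gpOf I G α g * gpOf I G β h = gpOf I G β h * gpOf I G α g := by
  have h1 : gpOf I G α g * gpOf I G β h * (gpOf I G α g)⁻¹ * (gpOf I G β h)⁻¹ = 1 := by
    have hmem : (Monoid.CoprodI.of g * Monoid.CoprodI.of h *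
        (Monoid.CoprodI.of g)⁻¹ * (Monoid.CoprodI.of h)⁻¹ :
        Monoid.CoprodI G) ∈ Subgroup.normalClosure (gpRels I G) :=
      Subgroup.subset_normalClosure ⟨α, β, g, h, hI, rfl⟩
    have := (QuotientGroup.eq_one_iff _).mpr hmem
    exact this
  have h2 : Commute (gpOf I G α g) (gpOf I G β h) :=
    commutatorElement_eq_one_iff_commute.mp (by
      rw [commutatorElement_def]; exact h1)
  exact h2.eq

theorem eval_step {u v : W} (h : TraceStep I G u v) :
    evalWord I G u = evalWord I G v := by
  cases h with
  | swap p q a b hI =>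
      have hc := gpOf_comm (I := I) (G := G) hI a.2.1 b.2.1
      simp only [evalWord_append, evalWord_cons, mul_assoc]
      congr 1
      rw [← mul_assoc, hc, mul_assoc]

theorem eval_eqv {u v : W} (h : TraceEquiv I G u v) :
    evalWord I G u = evalWord I G v := by
  induction h with
  | rel a b h => exact eval_step h
  | refl a => rfl
  | symm a b _ ih => exact ih.symm
  | trans a b c _ _ ih1 ih2 => exact ih1.trans ih2

theorem exists_reduced (hsym : ∀ α β, I α β → I β α) (w : W) :
    ∃ u : W, Reduced I G u ∧ evalWord I G u = evalWord I G w := by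
  suffices h : ∀ n (w : W), w.length ≤ n →
      ∃ u : W, Reduced I G u ∧ evalWord I G u = evalWord I G w from
    h w.length w le_rfl
  intro n
  induction n with
  | zero =>
      intro w hw
      rw [Nat.le_zero, List.length_eq_zero_iff] at hw
      subst hw
      exact ⟨[], reduced_nil, rfl⟩
  | succ n ih =>
      intro w hw
      by_cases hb : Bad I G w
      · rw [bad_iff, Reduced, not_not] at hb
        obtain ⟨β, b, b', x, u, y, rfl, hu⟩ := hb
        set bb : Letter L G := ⟨β, b⟩ with hbb
        set bb' : Letter L G := ⟨β, b'⟩ with hbb'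
        have he : TraceEquiv I G (x ++ bb :: (u ++ bb' :: y)) (x ++ (u ++ bb :: bb' :: y)) :=
          eqv_append_left x (eqv_symm (bubble (fun c hc => hu c hc) (bb' :: y)))
        have heval : evalWord I G (x ++ bb :: (u ++ bb' :: y)) =
            evalWord I G x * evalWord I G u *
              (gpOf I G β ((b : G β) * (b' : G β))) * evalWord I G y := by
          rw [eval_eqv he]
          simp only [evalWord_append, evalWord_cons, map_mul, ← mul_assoc]
          rfl
        by_cases h1 : (b : G β) * (b' : G β) = 1
        · have heval2 : evalWord I G (x ++ u ++ y) =
              evalWord I G (x ++ bb :: (u ++ bb' :: y)) := by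
            rw [heval, h1, map_one, mul_one]
            simp [evalWord_append, mul_assoc]
          have hlen : (x ++ u ++ y).length ≤ n := by
            simp only [List.length_append, List.length_cons] at hw ⊢
            omega
          obtain ⟨r, hr, hre⟩ := ih _ hlen
          exact ⟨r, hr, hre.trans heval2⟩
        · have heval2 : evalWord I G (x ++ u ++ (⟨β, ⟨_, h1⟩⟩ : Letter L G) :: y) =
              evalWord I G (x ++ bb :: (u ++ bb' :: y)) := by
            rw [heval]
            simp [evalWord_append, evalWord_cons, mul_assoc]
          have hlen : (x ++ u ++ (⟨β, ⟨_, h1⟩⟩ : Letter L G) :: y).length ≤ n := by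
            simp only [List.length_append, List.length_cons] at hw ⊢
            omega
          obtain ⟨r, hr, hre⟩ := ih _ hlen
          exact ⟨r, hr, hre.trans heval2⟩
      · exact ⟨w, reduced_iff.mpr hb, rfl⟩

end eval

section action

variable (I G)

def redSetoid : Setoid {w : List (Letter L G) // ¬ Bad I G w} :=
  ⟨fun u v => TraceEquiv I G u.1 v.1,
   ⟨fun _ => eqv_refl _, eqv_symm, eqv_trans⟩⟩

def S : Type := Quotient (redSetoid I G)

def mkS (w : List (Letter L G)) (h : ¬ Bad I G w) : S I G :=
  Quotient.mk (redSetoid I G) ⟨w, h⟩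

variable {I G}

theorem mkS_eq {w w' : W} {h : ¬ Bad I G w} {h' : ¬ Bad I G w'}
    (he : TraceEquiv I G w w') : mkS I G w h = mkS I G w' h' :=
  Quotient.sound he

theorem mkS_exact {w w' : W} {h : ¬ Bad I G w} {h' : ¬ Bad I G w'}
    (he : mkS I G w h = mkS I G w' h') : TraceEquiv I G w w' :=
  Quotient.exact he

theorem S_ind {motive : S I G → Prop}
    (h : ∀ (w : W) (hw : ¬ Bad I G w), motive (mkS I G w hw)) : ∀ x, motive x := by
  intro x
  induction x using Quotient.ind with
  | _ a => exact h a.1 a.2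

attribute [local instance] Classical.propDecidable

theorem not_bad_lead (hsym : ∀ α β, I α β → I β α) {w r : W} {a : Letter L G} (hw : ¬ Bad I G w)
    (hL : LeadS I G a w r) : ¬ Bad I G (a :: r) :=
  fun hb => hw ((bad_eqv hsym (leadS_eqv hL)).mpr hb)

/-- the action of `g ∈ G α` on a reduced word -/
noncomputable def Af (hsym : ∀ α β, I α β → I β α) (α : L) (g : G α) (w : {w : List (Letter L G) // ¬ Bad I G w}) : S I G :=
  if hg : g = 1 then mkS I G w.1 w.2
  else if h : HasLead I G α w.1 then
    if h1 : g * h.choose.1 = 1 then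
      mkS I G h.choose_spec.choose
        (not_bad_cons (not_bad_lead hsym w.2 h.choose_spec.choose_spec))
    else
      mkS I G ((⟨α, ⟨g * h.choose.1, h1⟩⟩ : Letter L G) :: h.choose_spec.choose)
        (fun hb => (not_bad_lead hsym w.2 h.choose_spec.choose_spec) (bad_cons_congr hb))
  else mkS I G ((⟨α, ⟨g, hg⟩⟩ : Letter L G) :: w.1) (not_bad_cons_of_not_hasLead w.2 h)

theorem letter_inj {α : L} {b b' : {g : G α // g ≠ 1}}
    (h : (⟨α, b⟩ : Letter L G) = ⟨α, b'⟩) : b = b' := by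
  simpa using h

theorem Af_lead (hsym : ∀ α β, I α β → I β α) (hirr : ∀ α, ¬ I α α) {α : L} {g : G α} (hg : g ≠ 1) (w : {w : W // ¬ Bad I G w})
    {b : {x : G α // x ≠ 1}} {r : W} (hL : LeadS I G (⟨α, b⟩ : Letter L G) w.1 r)
    {hr : ¬ Bad I G r} {hr' : ∀ h1, ¬ Bad I G ((⟨α, ⟨g * b.1, h1⟩⟩ : Letter L G) :: r)} :
    Af hsym α g w = if h1 : g * b.1 = 1 then mkS I G r hr
      else mkS I G ((⟨α, ⟨g * b.1, h1⟩⟩ : Letter L G) :: r) (hr' h1) := by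
  have hx : HasLead I G α w.1 := ⟨b, r, hL⟩
  rw [Af, dif_neg hg, dif_pos hx]
  have hL0 := hx.choose_spec.choose_spec
  obtain ⟨hbe, hre⟩ := leadS_unique hirr hL0 hL rfl
  have hb0 : hx.choose = b := letter_inj hbe
  subst hb0
  by_cases h1 : g * hx.choose.1 = 1
  · rw [dif_pos h1, dif_pos h1]
    exact mkS_eq hre
  · rw [dif_neg h1, dif_neg h1]
    exact mkS_eq (eqv_cons _ hre)

theorem Af_nolead (hsym : ∀ α β, I α β → I β α) {α : L} {g : G α} (hg : g ≠ 1) (w : {w : W // ¬ Bad I G w})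
    (h : ¬ HasLead I G α w.1) :
    Af hsym α g w = mkS I G ((⟨α, ⟨g, hg⟩⟩ : Letter L G) :: w.1)
      (not_bad_cons_of_not_hasLead w.2 h) := by
  rw [Af, dif_neg hg, dif_neg h]

theorem Af_respects (hsym : ∀ α β, I α β → I β α) (hirr : ∀ α, ¬ I α α) {α : L} (g : G α) (w w' : {w : W // ¬ Bad I G w})
    (he : TraceEquiv I G w.1 w'.1) : Af hsym α g w = Af hsym α g w' := by
  by_cases hg : g = 1
  · rw [Af, Af, dif_pos hg, dif_pos hg]
    exact Quotient.sound he
  · by_cases h : HasLead I G α w.1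
    · obtain ⟨b, r, hL⟩ := h
      obtain ⟨r', hL', hre⟩ := leadS_trans_eqv hsym he hL
      have hbr := not_bad_lead hsym w.2 hL
      have hbr' := not_bad_lead hsym w'.2 hL'
      rw [Af_lead hsym hirr hg w hL (hr := not_bad_cons hbr)
            (hr' := fun h1 hb => hbr (bad_cons_congr hb)),
          Af_lead hsym hirr hg w' hL' (hr := not_bad_cons hbr')
            (hr' := fun h1 hb => hbr' (bad_cons_congr hb))]
      by_cases h1 : g * b.1 = 1
      · rw [dif_pos h1, dif_pos h1]
        exact mkS_eq hre
      · rw [dif_neg h1, dif_neg h1]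
        exact mkS_eq (eqv_cons _ hre)
    · have h' : ¬ HasLead I G α w'.1 := fun hh => h (hasLead_eqv hsym (eqv_symm he) hh)
      rw [Af_nolead hsym hg w h, Af_nolead hsym hg w' h']
      exact mkS_eq (eqv_cons _ he)

/-- the action of `g ∈ G α` on trace classes of reduced words -/
noncomputable def A (hsym : ∀ α β, I α β → I β α) (hirr : ∀ α, ¬ I α α) (α : L) (g : G α) : S I G → S I G :=
  Quotient.lift (Af hsym α g) (Af_respects hsym hirr g)

theorem A_mkS (hsym : ∀ α β, I α β → I β α) (hirr : ∀ α, ¬ I α α) {α : L} (g : G α) (w : W) (hw : ¬ Bad I G w) :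
    A hsym hirr α g (mkS I G w hw) = Af hsym α g ⟨w, hw⟩ := rfl

theorem A_one (hsym : ∀ α β, I α β → I β α) (hirr : ∀ α, ¬ I α α) {α : L} (x : S I G) : A hsym hirr α 1 x = x := by
  induction x using S_ind with
  | h w hw => rw [A_mkS, Af, dif_pos rfl]

theorem A_lead_cancel (hsym : ∀ α β, I α β → I β α) (hirr : ∀ α, ¬ I α α) {α : L} {g : G α} (hg : g ≠ 1) {b : {x : G α // x ≠ 1}} {u : W}
    (hbu : ¬ Bad I G ((⟨α, b⟩ : Letter L G) :: u)) (h1 : g * b.1 = 1) :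
    A hsym hirr α g (mkS I G ((⟨α, b⟩ : Letter L G) :: u) hbu)
      = mkS I G u (not_bad_cons hbu) := by
  rw [A_mkS, Af_lead hsym hirr hg _ (LeadS.head u) (hr := not_bad_cons hbu)
    (hr' := fun h1 hb => hbu (bad_cons_congr hb)), dif_pos h1]

theorem A_lead_mul (hsym : ∀ α β, I α β → I β α) (hirr : ∀ α, ¬ I α α) {α : L} {g : G α} (hg : g ≠ 1) {b : {x : G α // x ≠ 1}} {u : W}
    (hbu : ¬ Bad I G ((⟨α, b⟩ : Letter L G) :: u)) (h1 : g * b.1 ≠ 1) :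
    A hsym hirr α g (mkS I G ((⟨α, b⟩ : Letter L G) :: u) hbu)
      = mkS I G ((⟨α, ⟨g * b.1, h1⟩⟩ : Letter L G) :: u)
          (fun hb => hbu (bad_cons_congr hb)) := by
  rw [A_mkS, Af_lead hsym hirr hg _ (LeadS.head u) (hr := not_bad_cons hbu)
    (hr' := fun h1 hb => hbu (bad_cons_congr hb)), dif_neg h1]

theorem A_nolead (hsym : ∀ α β, I α β → I β α) (hirr : ∀ α, ¬ I α α) {α : L} {g : G α} (hg : g ≠ 1) {w : W} (hw : ¬ Bad I G w)
    (h : ¬ HasLead I G α w) :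
    A hsym hirr α g (mkS I G w hw) = mkS I G ((⟨α, ⟨g, hg⟩⟩ : Letter L G) :: w)
      (not_bad_cons_of_not_hasLead hw h) := by
  rw [A_mkS, Af_nolead hsym hg _ h]

end action

section mul

theorem hasLead_cons_cases {β : L} {c : Letter L G} {w : W}
    (h : HasLead I G β (c :: w)) : c.1 = β ∨ HasLead I G β w := by
  obtain ⟨b, r, hr⟩ := h
  cases hr with
  | head => left; rfl
  | cons _ _ r' hI hw => right; exact ⟨b, r', hw⟩

theorem mkS_letter {α : L} {v v' : G α} {hv : v ≠ 1} {hv' : v' ≠ 1} {r : W}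
    {h : ¬ Bad I G ((⟨α, ⟨v, hv⟩⟩ : Letter L G) :: r)}
    {h' : ¬ Bad I G ((⟨α, ⟨v', hv'⟩⟩ : Letter L G) :: r)} (e : v = v') :
    mkS I G ((⟨α, ⟨v, hv⟩⟩ : Letter L G) :: r) h
      = mkS I G ((⟨α, ⟨v', hv'⟩⟩ : Letter L G) :: r) h' := by
  subst e; rfl

variable (hsym : ∀ α β, I α β → I β α) (hirr : ∀ α, ¬ I α α)

theorem A_mul {α : L} (g h : G α) (x : S I G) :
    A hsym hirr α (g * h) x = A hsym hirr α g (A hsym hirr α h x) := by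
  induction x using S_ind with
  | h w hw => ?_
  by_cases hg : g = 1
  · subst hg; rw [one_mul, A_one]
  by_cases hh : h = 1
  · subst hh; rw [mul_one, A_one]
  by_cases hL : HasLead I G α w
  · obtain ⟨b, r, hLr⟩ := hL
    have hbr : ¬ Bad I G ((⟨α, b⟩ : Letter L G) :: r) := not_bad_lead hsym hw hLr
    have hrr : ¬ Bad I G r := not_bad_cons hbr
    have hmk : mkS I G w hw = mkS I G ((⟨α, b⟩ : Letter L G) :: r) hbr :=
      mkS_eq (leadS_eqv hLr)
    rw [hmk]
    have hnl : ¬ HasLead I G α r := not_hasLead_tail hsym hbr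
    by_cases h1 : h * b.1 = 1
    · rw [A_lead_cancel hsym hirr hh hbr h1]
      have h2 : (g * h) * b.1 ≠ 1 := by
        rw [mul_assoc, h1, mul_one]; exact hg
      by_cases hgh : g * h = 1
      · rw [hgh, A_one, A_nolead hsym hirr hg (not_bad_cons hbr) hnl]
        refine (mkS_letter ?_).symm
        have hb : b.1 = h⁻¹ := eq_inv_of_mul_eq_one_right h1
        have : g = h⁻¹ := eq_inv_of_mul_eq_one_left hgh
        rw [this, hb]
      · rw [A_lead_mul hsym hirr hgh hbr h2,
          A_nolead hsym hirr hg (not_bad_cons hbr) hnl]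
        exact mkS_letter (by rw [mul_assoc, h1, mul_one])
    · rw [A_lead_mul hsym hirr hh hbr h1]
      by_cases h2 : g * (h * b.1) = 1
      · have hgh : g * h ≠ 1 := by
          intro e
          apply b.2
          rw [← mul_assoc, e, one_mul] at h2
          exact h2
        rw [A_lead_cancel hsym hirr hg _ h2,
          A_lead_cancel hsym hirr hgh hbr (by rw [mul_assoc]; exact h2)]
      · by_cases hgh : g * h = 1
        · rw [hgh, A_one, A_lead_mul hsym hirr hg _ h2]
          refine (mkS_letter ?_).symm
          rw [← mul_assoc, hgh, one_mul]
        · rw [A_lead_mul hsym hirr hgh hbr (by rw [mul_assoc]; exact h2),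
            A_lead_mul hsym hirr hg _ h2]
          exact mkS_letter (by rw [mul_assoc])
  · rw [A_nolead hsym hirr hh hw hL]
    by_cases h2 : g * h = 1
    · rw [h2, A_one, A_lead_cancel hsym hirr hg _ (by simpa using h2)]
    · rw [A_nolead hsym hirr h2 hw hL,
        A_lead_mul hsym hirr hg _ (by simpa using h2)]

end mul

section comm

theorem not_bad_of_eqv (hsym : ∀ α β, I α β → I β α) {w w' : W}
    (he : TraceEquiv I G w w') (hw : ¬ Bad I G w) :
    ¬ Bad I G w' := fun hb => hw ((bad_eqv hsym he).mpr hb)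

theorem not_hasLead_cons {β : L} {c : Letter L G} {w : W} (hc : c.1 ≠ β)
    (h : ¬ HasLead I G β w) : ¬ HasLead I G β (c :: w) := by
  intro hh
  rcases hasLead_cons_cases hh with h1 | h1
  · exact hc h1
  · exact h h1

theorem not_hasLead_tail_indep {α : L} {c : Letter L G} {w : W} (hc : I c.1 α)
    (h : ¬ HasLead I G α (c :: w)) : ¬ HasLead I G α w := by
  rintro ⟨b, r, hr⟩
  exact h ⟨b, c :: r, LeadS.cons c _ _ hc hr⟩

variable (hsym : ∀ α β, I α β → I β α) (hirr : ∀ α, ¬ I α α)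

/-- core commutation computation: words of the form `a :: b :: t` -/
theorem comm_core {α β : L} (hI : I α β) {g : G α} {h : G β}
    (hg : g ≠ 1) (hh : h ≠ 1) {a : {x : G α // x ≠ 1}} {b : {x : G β // x ≠ 1}}
    {t : W} (hw : ¬ Bad I G ((⟨α, a⟩ : Letter L G) :: (⟨β, b⟩ : Letter L G) :: t)) :
    A hsym hirr α g (A hsym hirr β h (mkS I G _ hw))
      = A hsym hirr β h (A hsym hirr α g (mkS I G _ hw)) := by
  have hIba : I β α := hsym _ _ hI
  have hswap : TraceEquiv I G ((⟨α, a⟩ : Letter L G) :: (⟨β, b⟩ : Letter L G) :: t)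
      ((⟨β, b⟩ : Letter L G) :: (⟨α, a⟩ : Letter L G) :: t) := swap_eqv hI t
  have hw' : ¬ Bad I G ((⟨β, b⟩ : Letter L G) :: (⟨α, a⟩ : Letter L G) :: t) :=
    not_bad_of_eqv hsym hswap hw
  have hbt : ¬ Bad I G ((⟨β, b⟩ : Letter L G) :: t) := not_bad_cons hw
  have hat : ¬ Bad I G ((⟨α, a⟩ : Letter L G) :: t) := not_bad_cons hw'
  have hαbt : ¬ HasLead I G α ((⟨β, b⟩ : Letter L G) :: t) := not_hasLead_tail hsym hw
  have hβat : ¬ HasLead I G β ((⟨α, a⟩ : Letter L G) :: t) := not_hasLead_tail hsym hw'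
  have hαt : ¬ HasLead I G α t := not_hasLead_tail_indep hIba hαbt
  have hβt : ¬ HasLead I G β t := not_hasLead_tail_indep hI hβat
  rw [show mkS I G ((⟨α, a⟩ : Letter L G) :: (⟨β, b⟩ : Letter L G) :: t) hw
      = mkS I G ((⟨β, b⟩ : Letter L G) :: (⟨α, a⟩ : Letter L G) :: t) hw' from
    mkS_eq hswap]
  by_cases h1 : h * b.1 = 1
  · rw [A_lead_cancel hsym hirr hh hw' h1]
    rw [show mkS I G ((⟨β, b⟩ : Letter L G) :: (⟨α, a⟩ : Letter L G) :: t) hw'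
        = mkS I G ((⟨α, a⟩ : Letter L G) :: (⟨β, b⟩ : Letter L G) :: t) hw from
      mkS_eq (eqv_symm hswap)]
    by_cases h2 : g * a.1 = 1
    · rw [A_lead_cancel hsym hirr hg hat h2, A_lead_cancel hsym hirr hg hw h2,
        A_lead_cancel hsym hirr hh hbt h1]
    · rw [A_lead_mul hsym hirr hg hat h2, A_lead_mul hsym hirr hg hw h2]
      have he2 : TraceEquiv I G
          ((⟨α, ⟨g * a.1, h2⟩⟩ : Letter L G) :: (⟨β, b⟩ : Letter L G) :: t)
          ((⟨β, b⟩ : Letter L G) :: (⟨α, ⟨g * a.1, h2⟩⟩ : Letter L G) :: t) :=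
        swap_eqv hI t
      rw [show mkS I G _ (fun hbad => hw (bad_cons_congr hbad))
          = mkS I G ((⟨β, b⟩ : Letter L G) :: (⟨α, ⟨g * a.1, h2⟩⟩ : Letter L G) :: t)
            (not_bad_of_eqv hsym he2 (fun hbad => hw (bad_cons_congr hbad))) from
        mkS_eq he2]
      rw [A_lead_cancel hsym hirr hh _ h1]
  · rw [A_lead_mul hsym hirr hh hw' h1]
    have he1 : TraceEquiv I G
        ((⟨β, ⟨h * b.1, h1⟩⟩ : Letter L G) :: (⟨α, a⟩ : Letter L G) :: t)
        ((⟨α, a⟩ : Letter L G) :: (⟨β, ⟨h * b.1, h1⟩⟩ : Letter L G) :: t) :=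
      swap_eqv hIba t
    rw [show mkS I G _ (fun hbad => hw' (bad_cons_congr hbad))
        = mkS I G ((⟨α, a⟩ : Letter L G) :: (⟨β, ⟨h * b.1, h1⟩⟩ : Letter L G) :: t)
          (not_bad_of_eqv hsym he1 (fun hbad => hw' (bad_cons_congr hbad))) from
      mkS_eq he1]
    rw [show mkS I G ((⟨β, b⟩ : Letter L G) :: (⟨α, a⟩ : Letter L G) :: t) hw'
        = mkS I G ((⟨α, a⟩ : Letter L G) :: (⟨β, b⟩ : Letter L G) :: t) hw from
      mkS_eq (eqv_symm hswap)]
    by_cases h2 : g * a.1 = 1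
    · rw [A_lead_cancel hsym hirr hg _ h2, A_lead_cancel hsym hirr hg hw h2,
        A_lead_mul hsym hirr hh hbt h1]
    · rw [A_lead_mul hsym hirr hg _ h2, A_lead_mul hsym hirr hg hw h2]
      have he3 : TraceEquiv I G
          ((⟨α, ⟨g * a.1, h2⟩⟩ : Letter L G) :: (⟨β, b⟩ : Letter L G) :: t)
          ((⟨β, b⟩ : Letter L G) :: (⟨α, ⟨g * a.1, h2⟩⟩ : Letter L G) :: t) :=
        swap_eqv hI t
      rw [show mkS I G _ (fun hbad => hw (bad_cons_congr hbad))
          = mkS I G ((⟨β, b⟩ : Letter L G) :: (⟨α, ⟨g * a.1, h2⟩⟩ : Letter L G) :: t)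
            (not_bad_of_eqv hsym he3 (fun hbad => hw (bad_cons_congr hbad))) from
        mkS_eq he3]
      rw [A_lead_mul hsym hirr hh _ h1]
      exact mkS_eq (swap_eqv hI t)

/-- mixed case: `α`-lead but no `β`-lead -/
theorem comm_mixed {α β : L} (hI : I α β) {g : G α} {h : G β}
    (hg : g ≠ 1) (hh : h ≠ 1) {a : {x : G α // x ≠ 1}} {r : W}
    (hbr : ¬ Bad I G ((⟨α, a⟩ : Letter L G) :: r)) (hnr : ¬ HasLead I G β r) :
    A hsym hirr α g (A hsym hirr β h (mkS I G _ hbr))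
      = A hsym hirr β h (A hsym hirr α g (mkS I G _ hbr)) := by
  have hαβ : α ≠ β := fun e => hirr α (by rw [e] at hI ⊢; exact hI)
  have hIba : I β α := hsym _ _ hI
  have hnar : ¬ HasLead I G β ((⟨α, a⟩ : Letter L G) :: r) := not_hasLead_cons hαβ hnr
  rw [A_nolead hsym hirr hh hbr hnar]
  have hswap : TraceEquiv I G
      ((⟨β, ⟨h, hh⟩⟩ : Letter L G) :: (⟨α, a⟩ : Letter L G) :: r)
      ((⟨α, a⟩ : Letter L G) :: (⟨β, ⟨h, hh⟩⟩ : Letter L G) :: r) := swap_eqv hIba r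
  rw [show mkS I G ((⟨β, ⟨h, hh⟩⟩ : Letter L G) :: (⟨α, a⟩ : Letter L G) :: r)
        (not_bad_cons_of_not_hasLead hbr hnar)
      = mkS I G ((⟨α, a⟩ : Letter L G) :: (⟨β, ⟨h, hh⟩⟩ : Letter L G) :: r)
        (not_bad_of_eqv hsym hswap (not_bad_cons_of_not_hasLead hbr hnar)) from
    mkS_eq hswap]
  by_cases h2 : g * a.1 = 1
  · rw [A_lead_cancel hsym hirr hg _ h2, A_lead_cancel hsym hirr hg hbr h2,
      A_nolead hsym hirr hh (not_bad_cons hbr) hnr]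
  · rw [A_lead_mul hsym hirr hg _ h2, A_lead_mul hsym hirr hg hbr h2]
    have hnr2 : ¬ HasLead I G β ((⟨α, ⟨g * a.1, h2⟩⟩ : Letter L G) :: r) :=
      not_hasLead_cons hαβ hnr
    rw [A_nolead hsym hirr hh _ hnr2]
    exact mkS_eq (swap_eqv hI r)

theorem A_comm {α β : L} (hI : I α β) (g : G α) (h : G β) (x : S I G) :
    A hsym hirr α g (A hsym hirr β h x) = A hsym hirr β h (A hsym hirr α g x) := by
  induction x using S_ind with
  | h w hw => ?_
  by_cases hg : g = 1
  · subst hg; rw [A_one, A_one]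
  by_cases hh : h = 1
  · subst hh; rw [A_one, A_one]
  have hIba : I β α := hsym _ _ hI
  by_cases hLa : HasLead I G α w
  · obtain ⟨a, r, hLa⟩ := hLa
    have hbar : ¬ Bad I G ((⟨α, a⟩ : Letter L G) :: r) := not_bad_lead hsym hw hLa
    rw [show mkS I G w hw = mkS I G ((⟨α, a⟩ : Letter L G) :: r) hbar from
      mkS_eq (leadS_eqv hLa)]
    by_cases hLb : HasLead I G β r
    · obtain ⟨b, t, hLbt⟩ := hLb
      have he : TraceEquiv I G ((⟨α, a⟩ : Letter L G) :: r)
          ((⟨α, a⟩ : Letter L G) :: (⟨β, b⟩ : Letter L G) :: t) :=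
        eqv_cons _ (leadS_eqv hLbt)
      rw [show mkS I G ((⟨α, a⟩ : Letter L G) :: r) hbar
          = mkS I G ((⟨α, a⟩ : Letter L G) :: (⟨β, b⟩ : Letter L G) :: t)
            (not_bad_of_eqv hsym he hbar) from mkS_eq he]
      exact comm_core hsym hirr hI hg hh _
    · exact comm_mixed hsym hirr hI hg hh hbar hLb
  · by_cases hLb : HasLead I G β w
    · obtain ⟨b, s, hLb⟩ := hLb
      have hbbs : ¬ Bad I G ((⟨β, b⟩ : Letter L G) :: s) := not_bad_lead hsym hw hLb
      have hnas : ¬ HasLead I G α s := by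
        intro hs
        apply hLa
        refine hasLead_eqv hsym (eqv_symm (leadS_eqv hLb)) ?_
        obtain ⟨c, t, ht⟩ := hs
        exact ⟨c, (⟨β, b⟩ : Letter L G) :: t, LeadS.cons _ _ _ hIba ht⟩
      rw [show mkS I G w hw = mkS I G ((⟨β, b⟩ : Letter L G) :: s) hbbs from
        mkS_eq (leadS_eqv hLb)]
      exact (comm_mixed hsym hirr hIba hh hg hbbs hnas).symm
    · rw [A_nolead hsym hirr hh hw hLb]
      have hβα : β ≠ α := fun e => by subst e; exact hirr _ hIba
      have hna2 : ¬ HasLead I G α ((⟨β, ⟨h, hh⟩⟩ : Letter L G) :: w) :=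
        not_hasLead_cons hβα hLa
      rw [A_nolead hsym hirr hg _ hna2, A_nolead hsym hirr hg hw hLa]
      have hαβ : α ≠ β := fun e => by subst e; exact hirr _ hI
      have hnb2 : ¬ HasLead I G β ((⟨α, ⟨g, hg⟩⟩ : Letter L G) :: w) :=
        not_hasLead_cons hαβ hLb
      rw [A_nolead hsym hirr hh _ hnb2]
      exact mkS_eq (swap_eqv hI w)

end comm

section hom

variable (hsym : ∀ α β, I α β → I β α) (hirr : ∀ α, ¬ I α α)

noncomputable def phi (α : L) : G α →* Function.End (S I G) where
  toFun g := A hsym hirr α g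
  map_one' := funext fun x => A_one hsym hirr x
  map_mul' g h := funext fun x => A_mul hsym hirr g h x

noncomputable def Psi : Monoid.CoprodI G →* Function.End (S I G) :=
  Monoid.CoprodI.lift (fun α => phi hsym hirr α)

theorem Psi_rels : ∀ x ∈ gpRels I G, Psi hsym hirr x = 1 := by
  rintro x ⟨α, β, g, h, hIb, rfl⟩
  rw [show (Monoid.CoprodI.of g)⁻¹ = Monoid.CoprodI.of g⁻¹ from
      (map_inv Monoid.CoprodI.of g).symm,
    show (Monoid.CoprodI.of h)⁻¹ = Monoid.CoprodI.of h⁻¹ from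
      (map_inv Monoid.CoprodI.of h).symm,
    map_mul, map_mul, map_mul]
  rw [Psi, Monoid.CoprodI.lift_of, Monoid.CoprodI.lift_of,
    Monoid.CoprodI.lift_of, Monoid.CoprodI.lift_of]
  have hc : phi hsym hirr α g * phi hsym hirr β h
      = phi hsym hirr β h * phi hsym hirr α g :=
    funext fun x => A_comm hsym hirr hIb g h x
  have h1 : phi hsym hirr α g * phi hsym hirr α g⁻¹ = 1 := by
    rw [← map_mul]; simp
  have h2 : phi hsym hirr β h * phi hsym hirr β h⁻¹ = 1 := by
    rw [← map_mul]; simp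
  calc phi hsym hirr α g * phi hsym hirr β h * phi hsym hirr α g⁻¹ *
        phi hsym hirr β h⁻¹
      = phi hsym hirr β h * phi hsym hirr α g * phi hsym hirr α g⁻¹ *
        phi hsym hirr β h⁻¹ := by rw [hc]
    _ = phi hsym hirr β h * (phi hsym hirr α g * phi hsym hirr α g⁻¹) *
        phi hsym hirr β h⁻¹ := by rw [mul_assoc (phi hsym hirr β h)]
    _ = phi hsym hirr β h * phi hsym hirr β h⁻¹ := by rw [h1, mul_one]
    _ = 1 := h2

noncomputable def Phi : GP I G →* Function.End (S I G) :=
  QuotientGroup.lift _ (Psi hsym hirr)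
    (fun x hx => Subgroup.normalClosure_le_normal
      (fun y hy => MonoidHom.mem_ker.mpr (Psi_rels hsym hirr y hy)) hx)

theorem Phi_gpOf (α : L) (g : G α) :
    Phi hsym hirr (gpOf I G α g) = A hsym hirr α g := by
  show Psi hsym hirr (Monoid.CoprodI.of g) = _
  rw [Psi, Monoid.CoprodI.lift_of]
  rfl

theorem Phi_eval {w : W} (hw : ¬ Bad I G w) :
    Phi hsym hirr (evalWord I G w) (mkS I G [] (reduced_iff.mp reduced_nil))
      = mkS I G w hw := by
  induction w with
  | nil =>
      rw [show evalWord I G [] = 1 from rfl, map_one]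
      rfl
  | cons l w ih =>
      rw [evalWord_cons, map_mul]
      have hw' : ¬ Bad I G w := not_bad_cons hw
      show Phi hsym hirr (gpOf I G l.1 l.2.1)
        (Phi hsym hirr (evalWord I G w) (mkS I G [] _)) = _
      rw [ih hw', Phi_gpOf]
      have hnl : ¬ HasLead I G l.1 w := not_hasLead_tail hsym hw
      exact A_nolead hsym hirr l.2.2 hw' hnl

end hom

theorem main_eval_eq_iff (hirr : ∀ α, ¬ I α α) (hsym : ∀ α β, I α β → I β α)
    {u v : W} (hu : Reduced I G u) (hv : Reduced I G v)
    (he : evalWord I G u = evalWord I G v) : TraceEquiv I G u v := by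
  have hu' : ¬ Bad I G u := reduced_iff.mp hu
  have hv' : ¬ Bad I G v := reduced_iff.mp hv
  have h1 : Phi hsym hirr (evalWord I G u) (mkS I G [] (reduced_iff.mp reduced_nil))
      = Phi hsym hirr (evalWord I G v) (mkS I G [] (reduced_iff.mp reduced_nil)) := by
    rw [he]
  rw [Phi_eval hsym hirr hu', Phi_eval hsym hirr hv'] at h1
  exact mkS_exact h1

end GPAux

theorem word_problem_normal_forms
    {L : Type} [Finite L] (I : L → L → Prop) (G : L → Type) [∀ α, Group (G α)]
    (hirr : ∀ α, ¬ I α α) (hsym : ∀ α β, I α β → I β α) :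
    (∀ w : List (Letter L G), ∃ u : List (Letter L G),
        Reduced I G u ∧ evalWord I G u = evalWord I G w) ∧
    (∀ u v : List (Letter L G), Reduced I G u → Reduced I G v →
        (evalWord I G u = evalWord I G v ↔ TraceEquiv I G u v)) := by
  constructor
  · exact GPAux.exists_reduced hsym
  · intro u v hu hv
    constructor
    · exact GPAux.main_eval_eq_iff hirr hsym hu hv
    · exact GPAux.eval_eqv
end

section
/- Let α ∈ L and let w = u_0 a_1 u_1 ⋯ a_n u_n ∈ Γ* be its α-factorization. Then w is α-reduced if and only if a_i u_i a_{i+1} ≠ a_i a_{i+1} u_i in G for all 1 ≤ i < n. -/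
variable {L : Type} (I : L → L → Prop) (G : L → Type) [∀ α, Group (G α)]

section GPAux

open List

attribute [local instance] Classical.propDecidable

variable {L : Type} {I : L → L → Prop} {G : L → Type} [∀ α, Group (G α)]

theorem evalWord_nil : evalWord I G [] = 1 := rfl

theorem evalWord_cons (c : Letter L G) (w : List (Letter L G)) :
    evalWord I G (c :: w) = gpOf I G c.1 c.2.1 * evalWord I G w := by
  simp [evalWord]

theorem evalWord_append (v w : List (Letter L G)) :
    evalWord I G (v ++ w) = evalWord I G v * evalWord I G w := by
  simp [evalWord]

theorem gpComm {γ δ : L} (h : I γ δ) (g : G γ) (k : G δ) :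
    gpOf I G γ g * gpOf I G δ k = gpOf I G δ k * gpOf I G γ g := by
  have hmem : (Monoid.CoprodI.of g * Monoid.CoprodI.of k * (Monoid.CoprodI.of g)⁻¹ *
      (Monoid.CoprodI.of k)⁻¹ : Monoid.CoprodI G) ∈ Subgroup.normalClosure (gpRels I G) :=
    Subgroup.subset_normalClosure ⟨γ, δ, g, k, h, rfl⟩
  have h1 : gpOf I G γ g * gpOf I G δ k * (gpOf I G γ g)⁻¹ * (gpOf I G δ k)⁻¹ = 1 := by
    have h2 := (QuotientGroup.eq_one_iff (N := Subgroup.normalClosure (gpRels I G)) _).mpr hmem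
    simp only [gpOf, MonoidHom.comp_apply, QuotientGroup.mk'_apply]
    simp only [QuotientGroup.mk_mul, QuotientGroup.mk_inv] at h2
    exact h2
  calc gpOf I G γ g * gpOf I G δ k
      = (gpOf I G γ g * gpOf I G δ k * (gpOf I G γ g)⁻¹ * (gpOf I G δ k)⁻¹) *
        (gpOf I G δ k * gpOf I G γ g) := by group
    _ = gpOf I G δ k * gpOf I G γ g := by rw [h1, one_mul]

theorem eval_comm_right {β : L} {x : List (Letter L G)} (hx : ∀ c ∈ x, I c.1 β)
    (hsym : ∀ a b, I a b → I b a) (g : G β) :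
    evalWord I G x * gpOf I G β g = gpOf I G β g * evalWord I G x := by
  induction x with
  | nil => simp [evalWord_nil]
  | cons c x ih =>
    have h1 : I β c.1 := hsym _ _ (hx c (List.mem_cons_self))
    rw [evalWord_cons, mul_assoc, ih (fun d hd => hx d (List.mem_cons_of_mem _ hd)),
      ← mul_assoc, ← gpComm h1, mul_assoc]

/-! ### Trace equivalence toolkit -/

theorem TraceStep.symm' (hsym : ∀ a b, I a b → I b a) {w w' : List (Letter L G)}
    (h : TraceStep I G w w') : TraceStep I G w' w := by
  cases h with | swap u v a b hab => exact TraceStep.swap u v b a (hsym _ _ hab)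

theorem te_of_step {w w' : List (Letter L G)} (h : TraceStep I G w w') : TraceEquiv I G w w' :=
  Relation.EqvGen.rel _ _ h

theorem te_refl (w : List (Letter L G)) : TraceEquiv I G w w := Relation.EqvGen.refl w

theorem te_symm {w w' : List (Letter L G)} (h : TraceEquiv I G w w') : TraceEquiv I G w' w :=
  Relation.EqvGen.symm _ _ h

theorem te_trans {w₁ w₂ w₃ : List (Letter L G)} (h1 : TraceEquiv I G w₁ w₂)
    (h2 : TraceEquiv I G w₂ w₃) : TraceEquiv I G w₁ w₃ :=
  Relation.EqvGen.trans _ _ _ h1 h2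

theorem te_map (f : List (Letter L G) → List (Letter L G))
    (hf : ∀ w w', TraceStep I G w w' → TraceStep I G (f w) (f w'))
    {w w' : List (Letter L G)} (h : TraceEquiv I G w w') : TraceEquiv I G (f w) (f w') := by
  induction h with
  | rel a b hab => exact Relation.EqvGen.rel _ _ (hf _ _ hab)
  | refl a => exact Relation.EqvGen.refl _
  | symm a b _ ih => exact Relation.EqvGen.symm _ _ ih
  | trans a b c _ _ ih1 ih2 => exact Relation.EqvGen.trans _ _ _ ih1 ih2

theorem TraceStep.cons (c : Letter L G) {w w' : List (Letter L G)} (h : TraceStep I G w w') :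
    TraceStep I G (c :: w) (c :: w') := by
  cases h with
  | swap u v a b hab =>
    have := TraceStep.swap (I := I) (G := G) (c :: u) v a b hab
    simpa using this

theorem TraceStep.append_left (x : List (Letter L G)) {w w' : List (Letter L G)}
    (h : TraceStep I G w w') : TraceStep I G (x ++ w) (x ++ w') := by
  cases h with
  | swap u v a b hab =>
    have := TraceStep.swap (I := I) (G := G) (x ++ u) v a b hab
    simpa using this

theorem TraceStep.append_right (y : List (Letter L G)) {w w' : List (Letter L G)}
    (h : TraceStep I G w w') : TraceStep I G (w ++ y) (w' ++ y) := by
  cases h with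
  | swap u v a b hab =>
    have := TraceStep.swap (I := I) (G := G) u (v ++ y) a b hab
    simpa using this

theorem te_cons (c : Letter L G) {w w' : List (Letter L G)} (h : TraceEquiv I G w w') :
    TraceEquiv I G (c :: w) (c :: w') :=
  te_map _ (fun _ _ hs => hs.cons c) h

theorem te_append_left (x : List (Letter L G)) {w w' : List (Letter L G)}
    (h : TraceEquiv I G w w') : TraceEquiv I G (x ++ w) (x ++ w') :=
  te_map _ (fun _ _ hs => hs.append_left x) h

theorem te_append_right (y : List (Letter L G)) {w w' : List (Letter L G)}
    (h : TraceEquiv I G w w') : TraceEquiv I G (w ++ y) (w' ++ y) :=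
  te_map _ (fun _ _ hs => hs.append_right y) h

/-- A letter commuting with everything in `x` can be moved from the front past `x`. -/
theorem te_roll {d : Letter L G} {x y : List (Letter L G)} (h : ∀ c ∈ x, I d.1 c.1) :
    TraceEquiv I G (d :: (x ++ y)) (x ++ d :: y) := by
  induction x generalizing y with
  | nil => exact te_refl _
  | cons c x ih =>
    have h1 : TraceStep I G (d :: c :: (x ++ y)) (c :: d :: (x ++ y)) := by
      have := TraceStep.swap (I := I) (G := G) [] (x ++ y) d c (h c (List.mem_cons_self))
      simpa using this
    exact te_trans (te_of_step h1)
      (te_cons c (ih (fun e he => h e (List.mem_cons_of_mem _ he))))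

theorem eval_te {w w' : List (Letter L G)} (h : TraceEquiv I G w w') :
    evalWord I G w = evalWord I G w' := by
  induction h with
  | rel a b hab =>
    cases hab with
    | swap u v a b hab =>
      simp only [evalWord_append, evalWord_cons]
      congr 1
      rw [← mul_assoc, ← mul_assoc, gpComm hab]
  | refl a => rfl
  | symm a b _ ih => exact ih.symm
  | trans a b c _ _ ih1 ih2 => exact ih1.trans ih2

/-! ### Counting letters -/

theorem countAlpha_nil (α : L) : countAlpha G (α := α) [] = 0 := rfl

theorem countAlpha_cons (α : L) (c : Letter L G) (w : List (Letter L G)) :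
    countAlpha G α (c :: w) = (if c.1 = α then 1 else 0) + countAlpha G α w := by
  by_cases h : c.1 = α <;> simp [countAlpha, List.filter_cons, h] <;> omega

theorem countAlpha_append (α : L) (v w : List (Letter L G)) :
    countAlpha G α (v ++ w) = countAlpha G α v + countAlpha G α w := by
  simp [countAlpha, List.filter_append]

theorem countAlpha_step (α : L) {w w' : List (Letter L G)} (h : TraceStep I G w w') :
    countAlpha G α w = countAlpha G α w' := by
  cases h with
  | swap u v a b hab =>
    simp only [countAlpha_append, countAlpha_cons]
    omega

theorem countAlpha_eq_zero {α : L} {w : List (Letter L G)} (h : ∀ c ∈ w, c.1 ≠ α) :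
    countAlpha G α w = 0 := by
  induction w with
  | nil => rfl
  | cons c w ih =>
    rw [countAlpha_cons, if_neg (h c (List.mem_cons_self)),
      ih (fun d hd => h d (List.mem_cons_of_mem _ hd))]

theorem forall_ne_of_countAlpha_eq_zero {α : L} {w : List (Letter L G)}
    (h : countAlpha G α w = 0) : ∀ c ∈ w, c.1 ≠ α := by
  intro c hc hcα
  induction w with
  | nil => simp at hc
  | cons d w ih =>
    rw [countAlpha_cons] at h
    rcases List.mem_cons.mp hc with rfl | hc'
    · rw [if_pos hcα] at h; omega
    · exact ih (by omega) hc'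

/-- List surgery helper. -/
theorem append_eq_append_cons {X : Type*} {l1 l2 r1 r2 : List X} {e : X}
    (h : l1 ++ l2 = r1 ++ e :: r2) :
    (∃ m, l1 = r1 ++ e :: m ∧ r2 = m ++ l2) ∨ (∃ m, r1 = l1 ++ m ∧ l2 = m ++ e :: r2) := by
  rcases List.append_eq_append_iff.mp h with ⟨a', ha1, ha2⟩ | ⟨c', hc1, hc2⟩
  · exact Or.inr ⟨a', ha1, ha2⟩
  · cases c' with
    | nil => exact Or.inr ⟨[], by simpa using hc1.symm, by simpa using hc2.symm⟩
    | cons c0 cs =>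
      have hc2' : e = c0 ∧ r2 = cs ++ l2 := by
        have h2 := hc2
        simp only [List.cons_append] at h2
        exact ⟨(List.cons.injEq _ _ _ _ ▸ h2).1, (List.cons.injEq _ _ _ _ ▸ h2).2⟩
      exact Or.inl ⟨cs, by rw [hc1, hc2'.1], hc2'.2⟩

end GPAux
section GPAux2

open List

attribute [local instance] Classical.propDecidable

variable {L : Type} {I : L → L → Prop} {G : L → Type} [∀ α, Group (G α)]

/-- Find the (unique) letter from `Γ_β` that can be moved to the front. -/
noncomputable def splitW (I : L → L → Prop) (G : L → Type) [∀ α, Group (G α)] (β : L) :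
    List (Letter L G) →
      Option (List (Letter L G) × {g : G β // g ≠ 1} × List (Letter L G))
  | [] => none
  | c :: v =>
    if h : c.1 = β then some ([], h ▸ c.2, v)
    else if I c.1 β then (splitW I G β v).map (fun p => (c :: p.1, p.2.1, p.2.2)) else none

theorem splitW_some {β : L} {v x y : List (Letter L G)} {b : {g : G β // g ≠ 1}}
    (h : splitW I G β v = some (x, b, y)) :
    v = x ++ (⟨β, b⟩ : Letter L G) :: y ∧ ∀ c ∈ x, c.1 ≠ β ∧ I c.1 β := by
  induction v generalizing x y b with
  | nil => simp [splitW] at h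
  | cons c v ih =>
    rw [splitW] at h
    by_cases hc : c.1 = β
    · rw [dif_pos hc] at h
      obtain ⟨γ, cg⟩ := c
      subst hc
      simp only [Option.some.injEq, Prod.mk.injEq] at h
      obtain ⟨rfl, rfl, rfl⟩ := h
      exact ⟨rfl, by simp⟩
    · rw [dif_neg hc] at h
      by_cases hI : I c.1 β
      · rw [if_pos hI] at h
        cases hs : splitW I G β v with
        | none => rw [hs] at h; simp at h
        | some p =>
          obtain ⟨x', b', y'⟩ := p
          rw [hs] at h
          simp only [Option.map_some, Option.some.injEq, Prod.mk.injEq] at h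
          obtain ⟨hx, hb, hy⟩ := h
          subst hx; subst hb; subst hy
          obtain ⟨h1, h2⟩ := ih hs
          refine ⟨by rw [List.cons_append, ← h1], ?_⟩
          intro d hd
          rcases List.mem_cons.mp hd with rfl | hd'
          · exact ⟨hc, hI⟩
          · exact h2 d hd'
      · rw [if_neg hI] at h
        exact absurd h (by simp)

theorem splitW_of_decomp {β : L} {x y : List (Letter L G)} (b : {g : G β // g ≠ 1})
    (hx : ∀ c ∈ x, c.1 ≠ β ∧ I c.1 β) :
    splitW I G β (x ++ (⟨β, b⟩ : Letter L G) :: y) = some (x, b, y) := by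
  induction x with
  | nil => simp [splitW]
  | cons c x ih =>
    have hc := hx c (List.mem_cons_self)
    rw [List.cons_append, splitW, dif_neg hc.1, if_pos hc.2,
      ih (fun d hd => hx d (List.mem_cons_of_mem _ hd))]
    rfl

theorem splitW_none_of_free {β : L} {v : List (Letter L G)} (h : ∀ c ∈ v, c.1 ≠ β) :
    splitW I G β v = none := by
  induction v with
  | nil => rfl
  | cons c v ih =>
    rw [splitW, dif_neg (h c (List.mem_cons_self))]
    by_cases hI : I c.1 β
    · rw [if_pos hI, ih (fun d hd => h d (List.mem_cons_of_mem _ hd))]; rfl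
    · rw [if_neg hI]

/-- There is a movable `β`-letter. -/
def Movable (I : L → L → Prop) (G : L → Type) [∀ α, Group (G α)] (β : L)
    (w : List (Letter L G)) : Prop :=
  ∃ x c y, w = x ++ c :: y ∧ (c : Letter L G).1 = β ∧ ∀ e ∈ x, I e.1 β

theorem splitW_none_iff (hirr : ∀ a, ¬ I a a) {β : L} {v : List (Letter L G)} :
    splitW I G β v = none ↔ ¬ Movable I G β v := by
  constructor
  · rintro hn ⟨x, c, y, rfl, hc, hx⟩
    obtain ⟨γ, cg⟩ := c
    subst hc
    rw [splitW_of_decomp cg (fun d hd => ⟨fun hd1 => hirr γ (hd1 ▸ hx d hd), hx d hd⟩)] at hn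
    cases hn
  · intro hm
    cases hs : splitW I G β v with
    | none => rfl
    | some p =>
      obtain ⟨x, b, y⟩ := p
      obtain ⟨h1, h2⟩ := splitW_some hs
      exact absurd ⟨x, ⟨β, b⟩, y, h1, rfl, fun e he => (h2 e he).2⟩ hm

/-- The action of `g ∈ G β` on words. -/
noncomputable def actW (I : L → L → Prop) (G : L → Type) [∀ α, Group (G α)] (β : L)
    (g : G β) (w : List (Letter L G)) : List (Letter L G) :=
  if hg : g = 1 then w
  else
    match splitW I G β w with
    | none => (⟨β, g, hg⟩ : Letter L G) :: w
    | some (x, b, y) =>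
      if hgb : g * b.1 = 1 then x ++ y
      else x ++ (⟨β, g * b.1, hgb⟩ : Letter L G) :: y

theorem actW_one (β : L) (w : List (Letter L G)) : actW I G β 1 w = w := by
  simp [actW]

theorem actW_none {β : L} {g : G β} (hg : g ≠ 1) {w : List (Letter L G)}
    (h : splitW I G β w = none) : actW I G β g w = (⟨β, g, hg⟩ : Letter L G) :: w := by
  rw [actW, dif_neg hg, h]

theorem actW_merge {β : L} {g : G β} (hg : g ≠ 1) {w x y : List (Letter L G)}
    {b : {g : G β // g ≠ 1}} (h : splitW I G β w = some (x, b, y)) (hgb : g * b.1 ≠ 1) :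
    actW I G β g w = x ++ (⟨β, g * b.1, hgb⟩ : Letter L G) :: y := by
  rw [actW, dif_neg hg, h]
  simp [hgb]

theorem actW_del {β : L} {g : G β} (hg : g ≠ 1) {w x y : List (Letter L G)}
    {b : {g : G β // g ≠ 1}} (h : splitW I G β w = some (x, b, y)) (hgb : g * b.1 = 1) :
    actW I G β g w = x ++ y := by
  rw [actW, dif_neg hg, h]
  simp [hgb]

end GPAux2
section GPAux3

open List

variable {L : Type} {I : L → L → Prop} {G : L → Type} [∀ α, Group (G α)]

theorem Reduced_nil : Reduced I G [] := by
  rintro ⟨β, b, b', x, u, y, h, -⟩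
  simp at h

theorem Reduced.tail {c : Letter L G} {w : List (Letter L G)} (h : Reduced I G (c :: w)) :
    Reduced I G w := by
  rintro ⟨β, b, b', x, u, y, rfl, hind⟩
  exact h ⟨β, b, b', c :: x, u, y, rfl, hind⟩

theorem notReduced_cons_of_movable {c : Letter L G} {w : List (Letter L G)}
    (h : Movable I G c.1 w) : ¬ Reduced I G (c :: w) := by
  obtain ⟨x2, cc, y2, rfl, hcc, hx2⟩ := h
  obtain ⟨γ, g2⟩ := cc
  subst hcc
  intro hred
  exact hred ⟨c.1, c.2, g2, [], x2, y2, by simp, hx2⟩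

theorem Reduced.cons {c : Letter L G} {w : List (Letter L G)} (h : Reduced I G w)
    (hm : ¬ Movable I G c.1 w) : Reduced I G (c :: w) := by
  rintro ⟨β, b, b', x, u, y, heq, hind⟩
  cases x with
  | nil =>
    simp only [List.nil_append, List.cons.injEq] at heq
    obtain ⟨h1, h2⟩ := heq
    have hβ : c.1 = β := by rw [h1]
    exact hm ⟨u, ⟨β, b'⟩, y, h2, hβ.symm, fun e he => by rw [hβ]; exact hind e he⟩
  | cons x0 xs =>
    simp only [List.cons_append, List.cons.injEq] at heq
    exact h ⟨β, b, b', xs, u, y, heq.2, hind⟩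

theorem movable_insert {γ : L} {d : Letter L G} {x y : List (Letter L G)} (hI : I d.1 γ)
    (h : Movable I G γ (x ++ y)) : Movable I G γ (x ++ d :: y) := by
  obtain ⟨x2, c, y2, heq, hc, hx2⟩ := h
  rcases append_eq_append_cons heq with ⟨m, rfl, rfl⟩ | ⟨m, rfl, rfl⟩
  · exact ⟨x2, c, m ++ d :: y, by simp, hc, hx2⟩
  · refine ⟨x ++ d :: m, c, y2, by simp, hc, ?_⟩
    intro e he
    rcases List.mem_append.mp he with he' | he'
    · exact hx2 e (List.mem_append.mpr (Or.inl he'))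
    · rcases List.mem_cons.mp he' with rfl | he''
      · exact hI
      · exact hx2 e (List.mem_append.mpr (Or.inr he''))

theorem movable_replace {γ : L} {d d' : Letter L G} {x y : List (Letter L G)}
    (hdd : d'.1 = d.1) (h : Movable I G γ (x ++ d' :: y)) : Movable I G γ (x ++ d :: y) := by
  obtain ⟨x2, cc, y2, heq, hc, hx2⟩ := h
  rcases append_eq_append_cons heq with ⟨m, rfl, hy2⟩ | ⟨m, hxm, hmy⟩
  · exact ⟨x2, cc, m ++ d :: y, by simp, hc, hx2⟩
  · cases m with
    | nil =>
      simp only [List.nil_append, List.cons.injEq] at hmy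
      refine ⟨x, d, y2, by rw [hmy.2], by rw [← hdd, hmy.1]; exact hc, ?_⟩
      intro e he
      exact hx2 e (by rw [hxm]; simpa using he)
    | cons m0 ms =>
      simp only [List.cons_append, List.cons.injEq] at hmy
      obtain ⟨hdm, hy⟩ := hmy
      refine ⟨x ++ d :: ms, cc, y2, by rw [hy]; simp, hc, ?_⟩
      have hm0 : I m0.fst γ := hx2 m0 (by
        rw [hxm]; exact List.mem_append.mpr (Or.inr (List.mem_cons_self)))
      intro e he
      rcases List.mem_append.mp he with he' | he'
      · exact hx2 e (by rw [hxm]; exact List.mem_append.mpr (Or.inl he'))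
      · rcases List.mem_cons.mp he' with he0 | he''
        · rw [he0, ← hdd, hdm]; exact hm0
        · exact hx2 e (by
            rw [hxm]; exact List.mem_append.mpr (Or.inr (List.mem_cons_of_mem _ he'')))

/-- Reducedness only depends on the types of the letters. -/
theorem Reduced_of_map_fst {w w' : List (Letter L G)}
    (hmap : w.map Sigma.fst = w'.map Sigma.fst) (h : Reduced I G w) : Reduced I G w' := by
  rintro ⟨β, b, b', x, u, y, rfl, hind⟩
  rw [List.map_append, List.map_cons, List.map_append, List.map_cons] at hmap
  obtain ⟨l1, l2, rfl, hl1, hl2⟩ := List.map_eq_append_iff.mp hmap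
  obtain ⟨c, l3, rfl, hc, hl3⟩ := List.map_eq_cons_iff.mp hl2
  obtain ⟨l4, l5, rfl, hl4, hl5⟩ := List.map_eq_append_iff.mp hl3
  obtain ⟨c', l6, rfl, hc', hl6⟩ := List.map_eq_cons_iff.mp hl5
  obtain ⟨γ, cg⟩ := c
  obtain ⟨γ', cg'⟩ := c'
  simp only at hc hc'
  have hγ : γ = β := hc
  have hγ' : γ' = β := hc'
  subst hγ; subst hγ'
  refine h ⟨_, cg, cg', l1, l4, l6, rfl, ?_⟩
  intro e he
  have hmem : e.1 ∈ l4.map Sigma.fst := List.mem_map.mpr ⟨e, he, rfl⟩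
  rw [hl4] at hmem
  obtain ⟨e', he', hee⟩ := List.mem_map.mp hmem
  exact hee ▸ hind e' he'

theorem Reduced.delete (hsym : ∀ a b, I a b → I b a) {c : Letter L G}
    {x y : List (Letter L G)} (h : Reduced I G (x ++ c :: y))
    (hx : ∀ e ∈ x, I e.1 c.1) : Reduced I G (x ++ y) := by
  induction x with
  | nil => exact (List.nil_append y) ▸ (h.tail)
  | cons e x ih =>
    have h1 : Reduced I G (x ++ c :: y) := h.tail
    have h2 : Reduced I G (x ++ y) := ih h1 (fun d hd => hx d (List.mem_cons_of_mem _ hd))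
    refine Reduced.cons h2 ?_
    intro hmov
    obtain ⟨x2, cc, y2, heq, hcc, hx2⟩ := hmov
    rcases append_eq_append_cons heq with ⟨m, rfl, rfl⟩ | ⟨m, hxm, hy⟩
    · exact notReduced_cons_of_movable
        ⟨x2, cc, m ++ c :: y, by simp, hcc, hx2⟩ h
    · refine notReduced_cons_of_movable (w := x ++ c :: y) ?_ h
      refine ⟨x ++ c :: m, cc, y2, by rw [hy]; simp, hcc, ?_⟩
      intro e' he'
      rcases List.mem_append.mp he' with h1' | h1'
      · exact hx2 e' (by rw [hxm]; exact List.mem_append.mpr (Or.inl h1'))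
      · rcases List.mem_cons.mp h1' with h1c | h1''
        · rw [h1c]; exact hsym _ _ (hx e (List.mem_cons_self))
        · exact hx2 e' (by rw [hxm]; exact List.mem_append.mpr (Or.inr h1''))

theorem actW_reduced (hirr : ∀ a, ¬ I a a) (hsym : ∀ a b, I a b → I b a) {β : L}
    {g : G β} {w : List (Letter L G)} (h : Reduced I G w) :
    Reduced I G (actW I G β g w) := by
  by_cases hg : g = 1
  · rw [hg, actW_one]; exact h
  · cases hs : splitW I G β w with
    | none =>
      rw [actW_none hg hs]
      exact h.cons ((splitW_none_iff hirr).mp hs)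
    | some p =>
      obtain ⟨x, b, y⟩ := p
      obtain ⟨hw, hx⟩ := splitW_some hs
      by_cases hgb : g * b.1 = 1
      · rw [actW_del hg hs hgb]
        exact Reduced.delete hsym (hw ▸ h) (fun e he => (hx e he).2)
      · rw [actW_merge hg hs hgb]
        exact Reduced_of_map_fst (by simp) (hw ▸ h)

end GPAux3

section GPAux4

open List

variable {L : Type} {I : L → L → Prop} {G : L → Type} [∀ α, Group (G α)]

theorem splitW_cons_hit {β : L} (eg : {g : G β // g ≠ 1}) (rest : List (Letter L G)) :
    splitW I G β ((⟨β, eg⟩ : Letter L G) :: rest) = some ([], eg, rest) := by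
  have := splitW_of_decomp (I := I) (y := rest) eg (x := []) (by simp)
  simpa using this

theorem splitW_cons_pass {β : L} {e : Letter L G} (h1 : e.1 ≠ β) (h2 : I e.1 β)
    (rest : List (Letter L G)) :
    splitW I G β (e :: rest) =
      (splitW I G β rest).map (fun p => (e :: p.1, p.2.1, p.2.2)) := by
  rw [splitW, dif_neg h1, if_pos h2]

theorem splitW_cons_fail {β : L} {e : Letter L G} (h1 : e.1 ≠ β) (h2 : ¬ I e.1 β)
    (rest : List (Letter L G)) : splitW I G β (e :: rest) = none := by
  rw [splitW, dif_neg h1, if_neg h2]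

theorem actW_cons_pass (hsym : ∀ a b, I a b → I b a) {β : L} {e : Letter L G}
    (h1 : e.1 ≠ β) (h2 : I e.1 β) (g : G β) (rest : List (Letter L G)) :
    TraceEquiv I G (actW I G β g (e :: rest)) (e :: actW I G β g rest) := by
  by_cases hg : g = 1
  · rw [hg, actW_one, actW_one]; exact te_refl _
  · cases hs : splitW I G β rest with
    | none =>
      rw [actW_none hg ((splitW_cons_pass h1 h2 rest).trans (by rw [hs]; rfl)),
        actW_none hg hs]
      exact te_of_step (by
        have := TraceStep.swap (I := I) (G := G) [] rest (⟨β, g, hg⟩ : Letter L G) e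
          (hsym _ _ h2)
        simpa using this)
    | some p =>
      obtain ⟨x, b, y⟩ := p
      have hs' : splitW I G β (e :: rest) = some (e :: x, b, y) := by
        rw [splitW_cons_pass h1 h2 rest, hs]; rfl
      by_cases hgb : g * b.1 = 1
      · rw [actW_del hg hs' hgb, actW_del hg hs hgb]; exact te_refl _
      · rw [actW_merge hg hs' hgb, actW_merge hg hs hgb]; exact te_refl _

theorem actW_traceStep (hirr : ∀ a, ¬ I a a) (hsym : ∀ a b, I a b → I b a) {β : L}
    (g : G β) {w w' : List (Letter L G)} (h : TraceStep I G w w') :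
    TraceEquiv I G (actW I G β g w) (actW I G β g w') := by
  by_cases hg : g = 1
  · rw [hg, actW_one, actW_one]; exact te_of_step h
  obtain ⟨u, v, c, d, hcd⟩ := h
  induction u with
  | nil =>
    simp only [List.nil_append]
    by_cases hc : c.1 = β
    · -- c is the β-letter
      have hd : d.1 ≠ β := fun hdβ => hirr β (by rw [hc, hdβ] at hcd; exact hcd)
      obtain ⟨γ, cg⟩ := c
      subst hc
      have hIdβ : I d.1 γ := hsym _ _ hcd
      have hsw : splitW I G γ ((⟨γ, cg⟩ : Letter L G) :: d :: v) = some ([], cg, d :: v) :=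
        splitW_cons_hit cg _
      have hsw' : splitW I G γ (d :: (⟨γ, cg⟩ : Letter L G) :: v) = some ([d], cg, v) := by
        have := splitW_of_decomp (I := I) (y := v) cg (x := [d])
          (by intro e he; simp at he; subst he; exact ⟨hd, hIdβ⟩)
        simpa using this
      by_cases hgb : g * cg.1 = 1
      · rw [actW_del hg hsw hgb, actW_del hg hsw' hgb]; exact te_refl _
      · rw [actW_merge hg hsw hgb, actW_merge hg hsw' hgb]
        exact te_of_step (by
          have := TraceStep.swap (I := I) (G := G) [] v
            (⟨γ, g * cg.1, hgb⟩ : Letter L G) d hcd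
          simpa using this)
    · by_cases hd : d.1 = β
      · obtain ⟨γ, dg⟩ := d
        subst hd
        have hIcβ : I c.1 γ := hcd
        have hsw : splitW I G γ (c :: (⟨γ, dg⟩ : Letter L G) :: v) = some ([c], dg, v) := by
          have := splitW_of_decomp (I := I) (y := v) dg (x := [c])
            (by intro e he; simp at he; subst he; exact ⟨hc, hIcβ⟩)
          simpa using this
        have hsw' : splitW I G γ ((⟨γ, dg⟩ : Letter L G) :: c :: v) = some ([], dg, c :: v) :=
          splitW_cons_hit dg _
        by_cases hgb : g * dg.1 = 1
        · rw [actW_del hg hsw hgb, actW_del hg hsw' hgb]; exact te_refl _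
        · rw [actW_merge hg hsw hgb, actW_merge hg hsw' hgb]
          exact te_symm (te_of_step (by
            have := TraceStep.swap (I := I) (G := G) [] v
              (⟨γ, g * dg.1, hgb⟩ : Letter L G) c (hsym _ _ hcd)
            simpa using this))
      · -- neither c nor d is a β-letter
        by_cases hIc : I c.1 β
        · by_cases hId : I d.1 β
          · have e1 : TraceEquiv I G (actW I G β g (c :: d :: v)) (c :: d :: actW I G β g v) :=
              te_trans (actW_cons_pass hsym hc hIc g _)
                (te_cons c (actW_cons_pass hsym hd hId g _))
            have e2 : TraceEquiv I G (actW I G β g (d :: c :: v)) (d :: c :: actW I G β g v) :=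
              te_trans (actW_cons_pass hsym hd hId g _)
                (te_cons d (actW_cons_pass hsym hc hIc g _))
            refine te_trans e1 (te_trans ?_ (te_symm e2))
            exact te_of_step (by
              have := TraceStep.swap (I := I) (G := G) [] (actW I G β g v) c d hcd
              simpa using this)
          · have hn : splitW I G β (c :: d :: v) = none := by
              rw [splitW_cons_pass hc hIc, splitW_cons_fail hd hId]; rfl
            have hn' : splitW I G β (d :: c :: v) = none := splitW_cons_fail hd hId _
            rw [actW_none hg hn, actW_none hg hn']
            exact te_cons _ (te_of_step (by
              have := TraceStep.swap (I := I) (G := G) [] v c d hcd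
              simpa using this))
        · have hn : splitW I G β (c :: d :: v) = none := splitW_cons_fail hc hIc _
          have hn' : splitW I G β (d :: c :: v) = none := by
            by_cases hId : I d.1 β
            · rw [splitW_cons_pass hd hId, splitW_cons_fail hc hIc]; rfl
            · exact splitW_cons_fail hd hId _
          rw [actW_none hg hn, actW_none hg hn']
          exact te_cons _ (te_of_step (by
            have := TraceStep.swap (I := I) (G := G) [] v c d hcd
            simpa using this))
  | cons e u' ih =>
    by_cases he : e.1 = β
    · obtain ⟨γ, eg⟩ := e
      subst he
      have hs1 : splitW I G γ ((⟨γ, eg⟩ : Letter L G) :: (u' ++ c :: d :: v)) =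
          some ([], eg, u' ++ c :: d :: v) := splitW_cons_hit eg _
      have hs2 : splitW I G γ ((⟨γ, eg⟩ : Letter L G) :: (u' ++ d :: c :: v)) =
          some ([], eg, u' ++ d :: c :: v) := splitW_cons_hit eg _
      by_cases hgb : g * eg.1 = 1
      · rw [List.cons_append, List.cons_append, actW_del hg hs1 hgb, actW_del hg hs2 hgb]
        exact te_of_step (TraceStep.swap u' v c d hcd)
      · rw [List.cons_append, List.cons_append, actW_merge hg hs1 hgb,
          actW_merge hg hs2 hgb]
        exact te_cons _ (te_of_step (TraceStep.swap u' v c d hcd))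
    · by_cases hIe : I e.1 β
      · refine te_trans (by rw [List.cons_append]; exact actW_cons_pass hsym he hIe g _)
          (te_trans (te_cons e ih) ?_)
        rw [List.cons_append]
        exact te_symm (actW_cons_pass hsym he hIe g _)
      · have hn : splitW I G β (e :: (u' ++ c :: d :: v)) = none := splitW_cons_fail he hIe _
        have hn' : splitW I G β (e :: (u' ++ d :: c :: v)) = none := splitW_cons_fail he hIe _
        rw [List.cons_append, List.cons_append, actW_none hg hn, actW_none hg hn']
        exact te_cons _ (te_cons _ (te_of_step (TraceStep.swap u' v c d hcd)))

theorem actW_te (hirr : ∀ a, ¬ I a a) (hsym : ∀ a b, I a b → I b a) {β : L}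
    (g : G β) {w w' : List (Letter L G)} (h : TraceEquiv I G w w') :
    TraceEquiv I G (actW I G β g w) (actW I G β g w') := by
  induction h with
  | rel a b hab => exact actW_traceStep hirr hsym g hab
  | refl a => exact te_refl _
  | symm a b _ ih => exact te_symm ih
  | trans a b c _ _ ih1 ih2 => exact te_trans ih1 ih2

end GPAux4
section GPAux5

open List

variable {L : Type} {I : L → L → Prop} {G : L → Type} [∀ α, Group (G α)]

theorem not_movable_del {w : List (Letter L G)} (hred : Reduced I G w) {β : L}
    {x y : List (Letter L G)} {b : {g : G β // g ≠ 1}}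
    (hs : splitW I G β w = some (x, b, y)) : ¬ Movable I G β (x ++ y) := by
  obtain ⟨hw, hx⟩ := splitW_some hs
  rintro ⟨x2, cc, y2, heq, hcc, hx2⟩
  rcases append_eq_append_cons heq with ⟨m, hxeq, -⟩ | ⟨m, hx2m, hy⟩
  · have hmem : cc ∈ x := by
      rw [hxeq]; exact List.mem_append.mpr (Or.inr (List.mem_cons_self))
    exact (hx cc hmem).1 hcc
  · obtain ⟨γ, ccg⟩ := cc
    have hγ : γ = β := hcc
    subst hγ
    refine hred ⟨γ, b, ccg, x, m, y2, by rw [hw, hy], ?_⟩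
    intro e he
    exact hx2 e (by rw [hx2m]; exact List.mem_append.mpr (Or.inr he))

theorem actW_comp (hirr : ∀ a, ¬ I a a) (hsym : ∀ a b, I a b → I b a) {β : L}
    (g h : G β) {w : List (Letter L G)} (hred : Reduced I G w) :
    TraceEquiv I G (actW I G β g (actW I G β h w)) (actW I G β (g * h) w) := by
  by_cases hh : h = 1
  · rw [hh, actW_one, mul_one]; exact te_refl _
  by_cases hgone : g = 1
  · rw [hgone, actW_one, one_mul]; exact te_refl _
  cases hs : splitW I G β w with
  | none =>
    rw [actW_none hh hs]
    have hs2 : splitW I G β ((⟨β, h, hh⟩ : Letter L G) :: w) = some ([], ⟨h, hh⟩, w) :=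
      splitW_cons_hit _ _
    by_cases hgh : g * h = 1
    · rw [actW_del hgone hs2 hgh, hgh, actW_one]
      exact te_refl _
    · rw [actW_merge hgone hs2 hgh, actW_none hgh hs]
      simp only [List.nil_append]
      exact te_refl _
  | some p =>
    obtain ⟨x, b, y⟩ := p
    obtain ⟨hw, hx⟩ := splitW_some hs
    by_cases hhb : h * b.1 = 1
    · have hnone : splitW I G β (x ++ y) = none :=
        (splitW_none_iff hirr).mpr (not_movable_del hred hs)
      rw [actW_del hh hs hhb, actW_none hgone hnone]
      by_cases hgh : g * h = 1
      · have hg_eq : g = b.1 := by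
          have h1 : h = b.1⁻¹ := eq_inv_of_mul_eq_one_left hhb
          have h2 : g = h⁻¹ := eq_inv_of_mul_eq_one_left hgh
          rw [h2, h1, inv_inv]
        rw [hgh, actW_one, hw]
        have hlet : (⟨β, g, hgone⟩ : Letter L G) = (⟨β, b⟩ : Letter L G) :=
          congrArg (Sigma.mk β) (Subtype.ext hg_eq)
        rw [hlet]
        exact te_roll (fun c hc => hsym _ _ (hx c hc).2)
      · have hghb : (g * h) * b.1 ≠ 1 := by rw [mul_assoc, hhb, mul_one]; exact hgone
        rw [actW_merge hgh hs hghb]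
        have hlet : (⟨β, (g * h) * b.1, hghb⟩ : Letter L G) = (⟨β, g, hgone⟩ : Letter L G) :=
          congrArg (Sigma.mk β) (Subtype.ext (show (g * h) * b.1 = g by rw [mul_assoc, hhb, mul_one]))
        rw [hlet]
        exact te_roll (fun c hc => hsym _ _ (hx c hc).2)
    · have hs2 : splitW I G β (x ++ (⟨β, h * b.1, hhb⟩ : Letter L G) :: y) =
          some (x, ⟨h * b.1, hhb⟩, y) := splitW_of_decomp _ hx
      rw [actW_merge hh hs hhb]
      by_cases hghb : g * (h * b.1) = 1
      · rw [actW_del hgone hs2 hghb]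
        have hgh : g * h ≠ 1 := by
          intro h0
          apply b.2
          have := hghb
          rw [← mul_assoc, h0, one_mul] at this
          exact this
        rw [actW_del hgh hs (by rw [mul_assoc]; exact hghb)]
        exact te_refl _
      · rw [actW_merge hgone hs2 hghb]
        by_cases hgh : g * h = 1
        · rw [hgh, actW_one, hw]
          have hlet : (⟨β, g * (h * b.1), hghb⟩ : Letter L G) = (⟨β, b⟩ : Letter L G) :=
            congrArg (Sigma.mk β) (Subtype.ext (show g * (h * b.1) = b.1 by rw [← mul_assoc, hgh, one_mul]))
          rw [hlet]
          exact te_refl _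
        · have hghb' : (g * h) * b.1 ≠ 1 := by rw [mul_assoc]; exact hghb
          rw [actW_merge hgh hs hghb']
          have hlet : (⟨β, g * (h * b.1), hghb⟩ : Letter L G) =
              (⟨β, (g * h) * b.1, hghb'⟩ : Letter L G) :=
            congrArg (Sigma.mk β) (Subtype.ext (mul_assoc _ _ _).symm)
          rw [hlet]
          exact te_refl _

end GPAux5
section GPAux6

open List

variable {L : Type} {I : L → L → Prop} {G : L → Type} [∀ α, Group (G α)]

theorem actW_comm_aux1 (hirr : ∀ a, ¬ I a a) (hsym : ∀ a b, I a b → I b a) {β γ : L}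
    (hβγ : I β γ) {g : G β} {h : G γ} (hg : g ≠ 1) (hh : h ≠ 1)
    {w x y : List (Letter L G)} {b : {g : G β // g ≠ 1}}
    (hsome : splitW I G β w = some (x, b, y)) (hnone : splitW I G γ w = none) :
    actW I G β g (actW I G γ h w) = actW I G γ h (actW I G β g w) := by
  have hβneγ : β ≠ γ := fun hbg => hirr γ (hbg ▸ hβγ)
  obtain ⟨hw, hx⟩ := splitW_some hsome
  have hnm : ¬ Movable I G γ w := (splitW_none_iff hirr).mp hnone
  -- left side
  have hhead : actW I G γ h w = (⟨γ, h, hh⟩ : Letter L G) :: w := actW_none hh hnone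
  have hsplit2 : splitW I G β ((⟨γ, h, hh⟩ : Letter L G) :: w) =
      some ((⟨γ, h, hh⟩ : Letter L G) :: x, b, y) := by
    rw [splitW_cons_pass (show ((⟨γ, h, hh⟩ : Letter L G)).1 ≠ β from fun hc => hβneγ hc.symm)
      (hsym _ _ hβγ), hsome]
    rfl
  by_cases hgb : g * b.1 = 1
  · -- deletion by g
    have hL : actW I G β g (actW I G γ h w) = (⟨γ, h, hh⟩ : Letter L G) :: (x ++ y) := by
      rw [hhead, actW_del hg hsplit2 hgb]; rfl
    have hA : actW I G β g w = x ++ y := actW_del hg hsome hgb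
    have hnone2 : splitW I G γ (x ++ y) = none := by
      rw [splitW_none_iff hirr]
      intro hm
      exact hnm (hw ▸ movable_insert (d := (⟨β, b⟩ : Letter L G)) hβγ hm)
    rw [hL, hA, actW_none hh hnone2]
  · have hL : actW I G β g (actW I G γ h w) =
        (⟨γ, h, hh⟩ : Letter L G) :: (x ++ (⟨β, g * b.1, hgb⟩ : Letter L G) :: y) := by
      rw [hhead, actW_merge hg hsplit2 hgb]; rfl
    have hA : actW I G β g w = x ++ (⟨β, g * b.1, hgb⟩ : Letter L G) :: y :=
      actW_merge hg hsome hgb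
    have hnone2 : splitW I G γ (x ++ (⟨β, g * b.1, hgb⟩ : Letter L G) :: y) = none := by
      rw [splitW_none_iff hirr]
      intro hm
      exact hnm (hw ▸ movable_replace (d' := (⟨β, g * b.1, hgb⟩ : Letter L G)) (d := (⟨β, b⟩ : Letter L G)) rfl hm)
    rw [hL, hA, actW_none hh hnone2]

theorem actW_comm_aux2 (hirr : ∀ a, ¬ I a a) (hsym : ∀ a b, I a b → I b a) {β γ : L}
    (hβγ : I β γ) {g : G β} {h : G γ} (hg : g ≠ 1) (hh : h ≠ 1)
    {w xb ms yc : List (Letter L G)} {b : {g : G β // g ≠ 1}} {c : {g : G γ // g ≠ 1}}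
    (hsβ : splitW I G β w = some (xb, b, ms ++ (⟨γ, c⟩ : Letter L G) :: yc))
    (hsγ : splitW I G γ w = some (xb ++ (⟨β, b⟩ : Letter L G) :: ms, c, yc)) :
    actW I G β g (actW I G γ h w) = actW I G γ h (actW I G β g w) := by
  have hβneγ : β ≠ γ := fun hbg => hirr γ (hbg ▸ hβγ)
  obtain ⟨hwβ, hxβ⟩ := splitW_some hsβ
  obtain ⟨hwγ, hxγ⟩ := splitW_some hsγ
  have hms : ∀ e ∈ ms, e.1 ≠ γ ∧ I e.1 γ := fun e he =>
    hxγ e (List.mem_append.mpr (Or.inr (List.mem_cons_of_mem _ he)))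
  have hxbγ : ∀ e ∈ xb, e.1 ≠ γ ∧ I e.1 γ := fun e he =>
    hxγ e (List.mem_append.mpr (Or.inl he))
  have hpref1 : ∀ e ∈ xb ++ ms, e.1 ≠ γ ∧ I e.1 γ := by
    intro e he
    rcases List.mem_append.mp he with h' | h'
    · exact hxbγ e h'
    · exact hms e h'
  have sβ1 : splitW I G β (xb ++ (⟨β, b⟩ : Letter L G) :: (ms ++ yc)) =
      some (xb, b, ms ++ yc) := splitW_of_decomp b hxβ
  have sγ1 : splitW I G γ (xb ++ (ms ++ (⟨γ, c⟩ : Letter L G) :: yc)) =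
      some (xb ++ ms, c, yc) := by
    have := splitW_of_decomp (I := I) (x := xb ++ ms) (y := yc) c hpref1
    rw [List.append_assoc] at this
    exact this
  by_cases hgb : g * b.1 = 1 <;> by_cases hhc : h * c.1 = 1
  · -- both deletions
    rw [actW_del hh hsγ hhc, actW_del hg hsβ hgb, actW_del hh sγ1 hhc]
    rw [show (xb ++ (⟨β, b⟩ : Letter L G) :: ms) ++ yc =
      xb ++ (⟨β, b⟩ : Letter L G) :: (ms ++ yc) by simp]
    rw [actW_del hg sβ1 hgb]
    simp
  · -- g deletes, h merges
    have sβ2 : splitW I G β (xb ++ (⟨β, b⟩ : Letter L G) ::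
        (ms ++ (⟨γ, h * c.1, hhc⟩ : Letter L G) :: yc)) =
        some (xb, b, ms ++ (⟨γ, h * c.1, hhc⟩ : Letter L G) :: yc) :=
      splitW_of_decomp b hxβ
    rw [actW_merge hh hsγ hhc, actW_del hg hsβ hgb, actW_merge hh sγ1 hhc]
    rw [show (xb ++ (⟨β, b⟩ : Letter L G) :: ms) ++ (⟨γ, h * c.1, hhc⟩ : Letter L G) :: yc =
      xb ++ (⟨β, b⟩ : Letter L G) :: (ms ++ (⟨γ, h * c.1, hhc⟩ : Letter L G) :: yc) by simp]
    rw [actW_del hg sβ2 hgb]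
    simp
  · -- g merges, h deletes
    have sγ2 : splitW I G γ (xb ++ (⟨β, g * b.1, hgb⟩ : Letter L G) ::
        (ms ++ (⟨γ, c⟩ : Letter L G) :: yc)) =
        some (xb ++ (⟨β, g * b.1, hgb⟩ : Letter L G) :: ms, c, yc) := by
      have hpref2 : ∀ e ∈ xb ++ (⟨β, g * b.1, hgb⟩ : Letter L G) :: ms,
          e.1 ≠ γ ∧ I e.1 γ := by
        intro e he
        rcases List.mem_append.mp he with h' | h'
        · exact hxbγ e h'
        · rcases List.mem_cons.mp h' with h'' | h''
          · rw [h'']; exact ⟨hβneγ, hβγ⟩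
          · exact hms e h''
      have := splitW_of_decomp (I := I)
        (x := xb ++ (⟨β, g * b.1, hgb⟩ : Letter L G) :: ms) (y := yc) c hpref2
      rw [List.append_assoc, List.cons_append] at this
      exact this
    rw [actW_del hh hsγ hhc, actW_merge hg hsβ hgb, actW_del hh sγ2 hhc]
    rw [show (xb ++ (⟨β, b⟩ : Letter L G) :: ms) ++ yc =
      xb ++ (⟨β, b⟩ : Letter L G) :: (ms ++ yc) by simp]
    rw [actW_merge hg sβ1 hgb]
    simp
  · -- both merge
    have sβ2 : splitW I G β (xb ++ (⟨β, b⟩ : Letter L G) ::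
        (ms ++ (⟨γ, h * c.1, hhc⟩ : Letter L G) :: yc)) =
        some (xb, b, ms ++ (⟨γ, h * c.1, hhc⟩ : Letter L G) :: yc) :=
      splitW_of_decomp b hxβ
    have sγ2 : splitW I G γ (xb ++ (⟨β, g * b.1, hgb⟩ : Letter L G) ::
        (ms ++ (⟨γ, c⟩ : Letter L G) :: yc)) =
        some (xb ++ (⟨β, g * b.1, hgb⟩ : Letter L G) :: ms, c, yc) := by
      have hpref2 : ∀ e ∈ xb ++ (⟨β, g * b.1, hgb⟩ : Letter L G) :: ms,
          e.1 ≠ γ ∧ I e.1 γ := by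
        intro e he
        rcases List.mem_append.mp he with h' | h'
        · exact hxbγ e h'
        · rcases List.mem_cons.mp h' with h'' | h''
          · rw [h'']; exact ⟨hβneγ, hβγ⟩
          · exact hms e h''
      have := splitW_of_decomp (I := I)
        (x := xb ++ (⟨β, g * b.1, hgb⟩ : Letter L G) :: ms) (y := yc) c hpref2
      rw [List.append_assoc, List.cons_append] at this
      exact this
    rw [actW_merge hh hsγ hhc, actW_merge hg hsβ hgb, actW_merge hh sγ2 hhc]
    rw [show (xb ++ (⟨β, b⟩ : Letter L G) :: ms) ++ (⟨γ, h * c.1, hhc⟩ : Letter L G) :: yc =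
      xb ++ (⟨β, b⟩ : Letter L G) :: (ms ++ (⟨γ, h * c.1, hhc⟩ : Letter L G) :: yc) by simp]
    rw [actW_merge hg sβ2 hgb]
    simp

theorem actW_comm (hirr : ∀ a, ¬ I a a) (hsym : ∀ a b, I a b → I b a) {β γ : L}
    (hβγ : I β γ) (g : G β) (h : G γ) (w : List (Letter L G)) :
    TraceEquiv I G (actW I G β g (actW I G γ h w)) (actW I G γ h (actW I G β g w)) := by
  have hβneγ : β ≠ γ := fun hbg => hirr γ (hbg ▸ hβγ)
  by_cases hg : g = 1
  · rw [hg, actW_one, actW_one]; exact te_refl _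
  by_cases hh : h = 1
  · rw [hh, actW_one, actW_one]; exact te_refl _
  cases hsβ : splitW I G β w with
  | none =>
    cases hsγ : splitW I G γ w with
    | none =>
      have h1 : actW I G γ h w = (⟨γ, h, hh⟩ : Letter L G) :: w := actW_none hh hsγ
      have h2 : actW I G β g w = (⟨β, g, hg⟩ : Letter L G) :: w := actW_none hg hsβ
      have h3 : splitW I G β ((⟨γ, h, hh⟩ : Letter L G) :: w) = none := by
        rw [splitW_cons_pass (show γ ≠ β from fun hc => hβneγ hc.symm) (hsym _ _ hβγ), hsβ]
        rfl
      have h4 : splitW I G γ ((⟨β, g, hg⟩ : Letter L G) :: w) = none := by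
        rw [splitW_cons_pass (show β ≠ γ from hβneγ) hβγ, hsγ]
        rfl
      rw [h1, h2, actW_none hg h3, actW_none hh h4]
      exact te_of_step (by
        have := TraceStep.swap (I := I) (G := G) [] w (⟨β, g, hg⟩ : Letter L G)
          (⟨γ, h, hh⟩ : Letter L G) hβγ
        simpa using this)
    | some p =>
      obtain ⟨xc, c, yc⟩ := p
      rw [actW_comm_aux1 hirr hsym (hsym _ _ hβγ) hh hg hsγ hsβ]
      exact te_refl _
  | some p =>
    obtain ⟨xb, b, yb⟩ := p
    cases hsγ : splitW I G γ w with
    | none =>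
      rw [actW_comm_aux1 hirr hsym hβγ hg hh hsβ hsγ]
      exact te_refl _
    | some q =>
      obtain ⟨xc, c, yc⟩ := q
      obtain ⟨hwβ, hxβ⟩ := splitW_some hsβ
      obtain ⟨hwγ, hxγ⟩ := splitW_some hsγ
      have heq : xb ++ (⟨β, b⟩ : Letter L G) :: yb = xc ++ (⟨γ, c⟩ : Letter L G) :: yc :=
        hwβ.symm.trans hwγ
      rcases append_eq_append_cons heq with ⟨m, hxb, hyc⟩ | ⟨m, hxc, hyb⟩
      · -- γ-letter comes first
        have hsβ' : splitW I G β w = some (xc ++ (⟨γ, c⟩ : Letter L G) :: m, b, yb) := by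
          rw [hsβ, hxb]
        rw [actW_comm_aux2 hirr hsym (hsym _ _ hβγ) hh hg
          (by rw [hsγ, hyc]) (by rw [hsβ'])]
        exact te_refl _
      · cases m with
        | nil =>
          exfalso
          simp only [List.nil_append, List.cons.injEq] at hyb
          exact hβneγ (congrArg Sigma.fst hyb.1)
        | cons m0 ms =>
          simp only [List.cons_append, List.cons.injEq] at hyb
          obtain ⟨hm0, hyb'⟩ := hyb
          have hsγ' : splitW I G γ w = some (xb ++ (⟨β, b⟩ : Letter L G) :: ms, c, yc) := by
            rw [hsγ, hxc, hm0]
          rw [actW_comm_aux2 hirr hsym hβγ hg hh (by rw [hsβ, hyb']) hsγ']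
          exact te_refl _

end GPAux6
section GPAux7

open List

variable {L : Type} {I : L → L → Prop} {G : L → Type} [∀ α, Group (G α)]

def SA (I : L → L → Prop) (G : L → Type) [∀ α, Group (G α)] : Type :=
  Quot (TraceStep I G)

def mkSA (w : List (Letter L G)) : SA I G := Quot.mk _ w

theorem mkSA_te {w w' : List (Letter L G)} (h : TraceEquiv I G w w') :
    mkSA (I := I) w = mkSA w' := by
  induction h with
  | rel a b hab => exact Quot.sound hab
  | refl a => rfl
  | symm a b _ ih => exact ih.symm
  | trans a b c _ _ ih1 ih2 => exact ih1.trans ih2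

variable (hirr : ∀ a, ¬ I a a) (hsym : ∀ a b, I a b → I b a)

noncomputable def actA (β : L) (g : G β) : SA I G → SA I G :=
  Quot.lift (fun w => mkSA (actW I G β g w))
    (fun _ _ hab => mkSA_te (actW_traceStep hirr hsym g hab))

/-- The subtype of classes of reduced words. -/
def SR (I : L → L → Prop) (G : L → Type) [∀ α, Group (G α)] : Type :=
  {s : SA I G // ∃ w, Reduced I G w ∧ s = mkSA w}

def mkSR (w : List (Letter L G)) (h : Reduced I G w) : SR I G := ⟨mkSA w, w, h, rfl⟩

noncomputable def actR (β : L) (g : G β) (s : SR I G) : SR I G :=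
  ⟨actA hirr hsym β g s.1, by
    obtain ⟨w, hred, hs⟩ := s.2
    exact ⟨actW I G β g w, actW_reduced hirr hsym hred, by rw [hs]; rfl⟩⟩

theorem actR_mk (β : L) (g : G β) (w : List (Letter L G)) (hred : Reduced I G w) :
    actR hirr hsym β g (mkSR w hred) =
      mkSR (actW I G β g w) (actW_reduced hirr hsym hred) := rfl

theorem actR_one (β : L) (s : SR I G) : actR hirr hsym β (1 : G β) s = s := by
  apply Subtype.ext
  show actA hirr hsym β 1 s.1 = s.1
  obtain ⟨w, hred, hs⟩ := s.2
  rw [hs]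
  show mkSA (actW I G β 1 w) = mkSA w
  rw [actW_one]

theorem actR_comp (β : L) (g h : G β) (s : SR I G) :
    actR hirr hsym β g (actR hirr hsym β h s) = actR hirr hsym β (g * h) s := by
  apply Subtype.ext
  obtain ⟨w, hred, hs⟩ := s.2
  show actA hirr hsym β g (actA hirr hsym β h s.1) = actA hirr hsym β (g * h) s.1
  rw [hs]
  exact mkSA_te (actW_comp hirr hsym g h hred)

theorem actR_comm {β γ : L} (hβγ : I β γ) (g : G β) (h : G γ) (s : SR I G) :
    actR hirr hsym β g (actR hirr hsym γ h s) = actR hirr hsym γ h (actR hirr hsym β g s) := by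
  apply Subtype.ext
  obtain ⟨w, hred, hs⟩ := s.2
  show actA hirr hsym β g (actA hirr hsym γ h s.1) = actA hirr hsym γ h (actA hirr hsym β g s.1)
  rw [hs]
  exact mkSA_te (actW_comm hirr hsym hβγ g h w)

noncomputable def permR (β : L) (g : G β) : Equiv.Perm (SR I G) where
  toFun := actR hirr hsym β g
  invFun := actR hirr hsym β g⁻¹
  left_inv := fun s => by rw [actR_comp, inv_mul_cancel, actR_one]
  right_inv := fun s => by rw [actR_comp, mul_inv_cancel, actR_one]

noncomputable def homR (β : L) : G β →* Equiv.Perm (SR I G) where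
  toFun := permR hirr hsym β
  map_one' := Equiv.ext fun s => actR_one hirr hsym β s
  map_mul' := fun g h => Equiv.ext fun s => (actR_comp hirr hsym β g h s).symm

noncomputable def ΦR : GP I G →* Equiv.Perm (SR I G) :=
  QuotientGroup.lift _ (Monoid.CoprodI.lift (fun β => homR hirr hsym β)) (by
    refine Subgroup.normalClosure_le_normal ?_
    rintro x ⟨γ, δ, g, k, hI, rfl⟩
    have hcomm : homR hirr hsym γ g * homR hirr hsym δ k =
        homR hirr hsym δ k * homR hirr hsym γ g := by
      apply Equiv.ext
      intro s
      exact actR_comm hirr hsym hI g k s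
    show _ ∈ MonoidHom.ker _
    rw [MonoidHom.mem_ker]
    simp only [map_mul, map_inv, Monoid.CoprodI.lift_of]
    rw [hcomm]
    group)

theorem ΦR_gpOf (β : L) (g : G β) :
    ΦR hirr hsym (gpOf I G β g) = homR hirr hsym β g := by
  show QuotientGroup.lift _ _ _ (QuotientGroup.mk (Monoid.CoprodI.of g)) = _
  rw [QuotientGroup.lift_mk, Monoid.CoprodI.lift_of]

end GPAux7
section GPAux8

open List

variable {L : Type} {I : L → L → Prop} {G : L → Type} [∀ α, Group (G α)]

noncomputable def countR (α : L) (s : SR I G) : ℕ :=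
  Quot.lift (countAlpha G α) (fun _ _ hab => countAlpha_step α hab) s.1

theorem countR_mk (α : L) (w : List (Letter L G)) (hred : Reduced I G w) :
    countR α (mkSR w hred) = countAlpha G α w := rfl

noncomputable def evalR (s : SR I G) : GP I G :=
  Quot.lift (evalWord I G) (fun _ _ hab => eval_te (te_of_step hab)) s.1

theorem evalR_mk (w : List (Letter L G)) (hred : Reduced I G w) :
    evalR (mkSR w hred) = evalWord I G w := rfl

theorem evalWord_actW (hsym : ∀ a b, I a b → I b a) (β : L) (g : G β)
    (w : List (Letter L G)) :
    evalWord I G (actW I G β g w) = gpOf I G β g * evalWord I G w := by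
  by_cases hg : g = 1
  · rw [hg, actW_one, map_one, one_mul]
  cases hs : splitW I G β w with
  | none => rw [actW_none hg hs, evalWord_cons]
  | some p =>
    obtain ⟨x, b, y⟩ := p
    obtain ⟨hw, hx⟩ := splitW_some hs
    have hcomm := eval_comm_right (fun c hc => (hx c hc).2) hsym g
    have hkey : ∀ (k : G β), gpOf I G β g * evalWord I G (x ++ (⟨β, b⟩ : Letter L G) :: y) =
        evalWord I G x * (gpOf I G β (g * b.1)) * evalWord I G y := by
      intro k
      calc gpOf I G β g * evalWord I G (x ++ (⟨β, b⟩ : Letter L G) :: y)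
          = (gpOf I G β g * evalWord I G x) * gpOf I G β b.1 * evalWord I G y := by
            rw [evalWord_append, evalWord_cons]; group
        _ = (evalWord I G x * gpOf I G β g) * gpOf I G β b.1 * evalWord I G y := by
            rw [hcomm]
        _ = evalWord I G x * (gpOf I G β (g * b.1)) * evalWord I G y := by
            rw [map_mul]; group
    by_cases hgb : g * b.1 = 1
    · rw [actW_del hg hs hgb, hw, hkey 1, hgb, map_one, mul_one, evalWord_append]
    · rw [actW_merge hg hs hgb, hw, hkey 1, evalWord_append, evalWord_cons]
      group
  
theorem countAlpha_actW_ne {α β : L} (hne : β ≠ α) (g : G β) (w : List (Letter L G)) :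
    countAlpha G α (actW I G β g w) = countAlpha G α w := by
  by_cases hg : g = 1
  · rw [hg, actW_one]
  cases hs : splitW I G β w with
  | none => rw [actW_none hg hs, countAlpha_cons, if_neg hne, zero_add]
  | some p =>
    obtain ⟨x, b, y⟩ := p
    obtain ⟨hw, -⟩ := splitW_some hs
    by_cases hgb : g * b.1 = 1
    · rw [actW_del hg hs hgb, hw, countAlpha_append, countAlpha_append, countAlpha_cons,
        if_neg hne, zero_add]
    · rw [actW_merge hg hs hgb, hw, countAlpha_append, countAlpha_append, countAlpha_cons,
        countAlpha_cons, if_neg hne]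

theorem countAlpha_actW_le (α β : L) (g : G β) (w : List (Letter L G)) :
    countAlpha G α (actW I G β g w) ≤ 1 + countAlpha G α w := by
  by_cases hg : g = 1
  · rw [hg, actW_one]; omega
  cases hs : splitW I G β w with
  | none => rw [actW_none hg hs, countAlpha_cons]; split <;> omega
  | some p =>
    obtain ⟨x, b, y⟩ := p
    obtain ⟨hw, -⟩ := splitW_some hs
    by_cases hgb : g * b.1 = 1
    · rw [actW_del hg hs hgb, hw, countAlpha_append, countAlpha_append, countAlpha_cons]
      split <;> omega
    · rw [actW_merge hg hs hgb, hw, countAlpha_append, countAlpha_append, countAlpha_cons,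
        countAlpha_cons]
      split <;> omega

variable (hirr : ∀ a, ¬ I a a) (hsym : ∀ a b, I a b → I b a)

theorem countR_actR_ne {α β : L} (hne : β ≠ α) (g : G β) (s : SR I G) :
    countR α (actR hirr hsym β g s) = countR α s := by
  obtain ⟨w, hred, hs⟩ := s.2
  have hs' : s = mkSR w hred := Subtype.ext hs
  rw [hs', actR_mk, countR_mk, countR_mk, countAlpha_actW_ne hne]

theorem countR_actR_le (α β : L) (g : G β) (s : SR I G) :
    countR α (actR hirr hsym β g s) ≤ 1 + countR α s := by
  obtain ⟨w, hred, hs⟩ := s.2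
  have hs' : s = mkSR w hred := Subtype.ext hs
  rw [hs', actR_mk, countR_mk, countR_mk]
  exact countAlpha_actW_le α β g w

theorem evalR_actR (β : L) (g : G β) (s : SR I G) :
    evalR (actR hirr hsym β g s) = gpOf I G β g * evalR s := by
  obtain ⟨w, hred, hs⟩ := s.2
  have hs' : s = mkSR w hred := Subtype.ext hs
  rw [hs', actR_mk, evalR_mk, evalR_mk, evalWord_actW hsym]

/-- Stacking a word onto a state. -/
noncomputable def stFrom (v : List (Letter L G)) (s : SR I G) : SR I G :=
  ΦR hirr hsym (evalWord I G v) s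

theorem stFrom_nil (s : SR I G) : stFrom hirr hsym [] s = s := by
  show ΦR hirr hsym (1 : GP I G) s = s
  rw [map_one]
  rfl

theorem stFrom_cons (c : Letter L G) (v : List (Letter L G)) (s : SR I G) :
    stFrom hirr hsym (c :: v) s = actR hirr hsym c.1 c.2.1 (stFrom hirr hsym v s) := by
  show ΦR hirr hsym (evalWord I G (c :: v)) s = _
  rw [evalWord_cons, map_mul, ΦR_gpOf]
  rfl

theorem stFrom_append (v v' : List (Letter L G)) (s : SR I G) :
    stFrom hirr hsym (v ++ v') s = stFrom hirr hsym v (stFrom hirr hsym v' s) := by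
  show ΦR hirr hsym (evalWord I G (v ++ v')) s = _
  rw [evalWord_append, map_mul]
  rfl

theorem evalR_stFrom (v : List (Letter L G)) (s : SR I G) :
    evalR (stFrom hirr hsym v s) = evalWord I G v * evalR s := by
  induction v with
  | nil => rw [stFrom_nil, evalWord_nil, one_mul]
  | cons c v ih =>
    rw [stFrom_cons, evalR_actR, ih, evalWord_cons, mul_assoc]

theorem countR_stFrom_le (α : L) (v : List (Letter L G)) (s : SR I G) :
    countR α (stFrom hirr hsym v s) ≤ countAlpha G α v + countR α s := by
  induction v with
  | nil => rw [stFrom_nil, countAlpha_nil]; omega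
  | cons c v ih =>
    rw [stFrom_cons, countAlpha_cons]
    by_cases hc : c.1 = α
    · have := countR_actR_le hirr hsym α c.1 c.2.1 (stFrom hirr hsym v s)
      rw [if_pos hc]
      omega
    · rw [countR_actR_ne hirr hsym hc, if_neg hc]
      omega

theorem countR_stFrom_free {α : L} {v : List (Letter L G)} (hv : ∀ c ∈ v, c.1 ≠ α)
    (s : SR I G) : countR α (stFrom hirr hsym v s) = countR α s := by
  induction v with
  | nil => rw [stFrom_nil]
  | cons c v ih =>
    rw [stFrom_cons, countR_actR_ne hirr hsym (hv c (List.mem_cons_self)),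
      ih (fun d hd => hv d (List.mem_cons_of_mem _ hd))]

end GPAux8
section GPAux9

open List

variable {L : Type} {I : L → L → Prop} {G : L → Type} [∀ α, Group (G α)]
variable (hirr : ∀ a, ¬ I a a) (hsym : ∀ a b, I a b → I b a)

theorem key_lemma (α : L) (u : List (Letter L G)) (hu : ∀ c ∈ u, c.1 ≠ α)
    (r : List (Letter L G)) (hred : Reduced I G r) (a : {g : G α // g ≠ 1})
    (z : List (Letter L G)) (hr : r = (⟨α, a⟩ : Letter L G) :: z) :
    ∃ (r' : List (Letter L G)) (hred' : Reduced I G r')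
      (p q z' : List (Letter L G)),
      stFrom hirr hsym u (mkSR r hred) = mkSR r' hred' ∧
      r' = p ++ (⟨α, a⟩ : Letter L G) :: z' ∧ (∀ c ∈ p, c.1 ≠ α) ∧
      (∀ c ∈ q, I c.1 α) ∧ evalWord I G u = evalWord I G p * evalWord I G q := by
  induction u with
  | nil =>
    refine ⟨r, hred, [], [], z, stFrom_nil hirr hsym _, hr, by simp, by simp, by simp [evalWord_nil]⟩
  | cons c u ih =>
    obtain ⟨r', hred', p, q, z', hstack, hr', hp, hq, heval⟩ :=
      ih (fun d hd => hu d (List.mem_cons_of_mem _ hd))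
    have hcα : c.1 ≠ α := hu c (List.mem_cons_self)
    have hg : c.2.1 ≠ 1 := c.2.2
    have hstep : stFrom hirr hsym (c :: u) (mkSR r hred) =
        mkSR (actW I G c.1 c.2.1 r') (actW_reduced hirr hsym hred') := by
      rw [stFrom_cons, hstack, actR_mk]
    cases hs : splitW I G c.1 r' with
    | none =>
      refine ⟨actW I G c.1 c.2.1 r', actW_reduced hirr hsym hred', c :: p, q, z',
        hstep, ?_, ?_, hq, ?_⟩
      · rw [actW_none hg hs, hr']; rfl
      · intro d hd
        rcases List.mem_cons.mp hd with rfl | hd'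
        · exact hcα
        · exact hp d hd'
      · rw [evalWord_cons, heval, evalWord_cons, mul_assoc]
    | some pr =>
      obtain ⟨x, b, y⟩ := pr
      obtain ⟨hw', hx⟩ := splitW_some hs
      have heq2 : p ++ (⟨α, a⟩ : Letter L G) :: z' =
          x ++ (⟨c.1, b⟩ : Letter L G) :: y := hr' ▸ hw'
      rcases append_eq_append_cons heq2 with ⟨m, hp_eq, hy⟩ | ⟨m, hx_eq, hmz⟩
      · -- the merged letter lies inside p
        have hxp : ∀ e ∈ x, e ∈ p := fun e he => by
          rw [hp_eq]; exact List.mem_append.mpr (Or.inl he)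
        have hmp : ∀ e ∈ m, e ∈ p := fun e he => by
          rw [hp_eq]; exact List.mem_append.mpr (Or.inr (List.mem_cons_of_mem _ he))
        have hcommx := eval_comm_right (fun e he => (hx e he).2) hsym c.2.1
        have hevalp : evalWord I G p =
            evalWord I G x * gpOf I G c.1 b.1 * evalWord I G m := by
          rw [hp_eq, evalWord_append, evalWord_cons]; group
        by_cases hgb : c.2.1 * b.1 = 1
        · refine ⟨actW I G c.1 c.2.1 r', actW_reduced hirr hsym hred', x ++ m, q, z',
            hstep, ?_, ?_, hq, ?_⟩
          · rw [actW_del hg hs hgb, hy]; simp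
          · intro d hd
            rcases List.mem_append.mp hd with hd' | hd'
            · exact hp d (hxp d hd')
            · exact hp d (hmp d hd')
          · rw [evalWord_cons, heval, hevalp, evalWord_append]
            calc gpOf I G c.1 c.2.1 *
                  (evalWord I G x * gpOf I G c.1 b.1 * evalWord I G m * evalWord I G q)
                = (gpOf I G c.1 c.2.1 * evalWord I G x) * gpOf I G c.1 b.1 *
                  evalWord I G m * evalWord I G q := by group
              _ = (evalWord I G x * gpOf I G c.1 c.2.1) * gpOf I G c.1 b.1 *
                  evalWord I G m * evalWord I G q := by rw [hcommx]
              _ = evalWord I G x * gpOf I G c.1 (c.2.1 * b.1) *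
                  evalWord I G m * evalWord I G q := by rw [map_mul]; group
              _ = evalWord I G x * evalWord I G m * evalWord I G q := by
                  rw [hgb, map_one, mul_one]
        · refine ⟨actW I G c.1 c.2.1 r', actW_reduced hirr hsym hred',
            x ++ (⟨c.1, c.2.1 * b.1, hgb⟩ : Letter L G) :: m, q, z',
            hstep, ?_, ?_, hq, ?_⟩
          · rw [actW_merge hg hs hgb, hy]; simp
          · intro d hd
            rcases List.mem_append.mp hd with hd' | hd'
            · exact hp d (hxp d hd')
            · rcases List.mem_cons.mp hd' with rfl | hd''
              · exact hcα
              · exact hp d (hmp d hd'')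
          · rw [evalWord_cons, heval, hevalp, evalWord_append, evalWord_cons]
            calc gpOf I G c.1 c.2.1 *
                  (evalWord I G x * gpOf I G c.1 b.1 * evalWord I G m * evalWord I G q)
                = (gpOf I G c.1 c.2.1 * evalWord I G x) * gpOf I G c.1 b.1 *
                  evalWord I G m * evalWord I G q := by group
              _ = (evalWord I G x * gpOf I G c.1 c.2.1) * gpOf I G c.1 b.1 *
                  evalWord I G m * evalWord I G q := by rw [hcommx]
              _ = evalWord I G x * (gpOf I G c.1 (c.2.1 * b.1) * evalWord I G m) *
                  evalWord I G q := by rw [map_mul]; group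
      · -- the merged letter lies beyond the leading α-letter
        cases m with
        | nil =>
          exfalso
          simp only [List.nil_append, List.cons.injEq] at hmz
          exact hcα (congrArg Sigma.fst hmz.1).symm
        | cons m0 ms =>
          simp only [List.cons_append, List.cons.injEq] at hmz
          obtain ⟨hm0, hz'⟩ := hmz
          have hm0x : m0 ∈ x := by
            rw [hx_eq]; exact List.mem_append.mpr (Or.inr (List.mem_cons_self))
          have haI : I α c.1 := by
            have h1 := (hx m0 hm0x).2
            rw [← hm0] at h1
            exact h1
          have hpI : ∀ e ∈ p, I e.1 c.1 := fun e he =>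
            (hx e (by rw [hx_eq]; exact List.mem_append.mpr (Or.inl he))).2
          have hcommp := eval_comm_right hpI hsym c.2.1
          have hqI : ∀ d ∈ (c :: q), I d.1 α := by
            intro d hd
            rcases List.mem_cons.mp hd with rfl | hd'
            · exact hsym _ _ haI
            · exact hq d hd'
          have hevgoal : evalWord I G (c :: u) =
              evalWord I G p * evalWord I G (c :: q) := by
            rw [evalWord_cons, heval, evalWord_cons, ← mul_assoc, ← hcommp, mul_assoc]
          by_cases hgb : c.2.1 * b.1 = 1
          · refine ⟨actW I G c.1 c.2.1 r', actW_reduced hirr hsym hred', p, c :: q,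
              ms ++ y, hstep, ?_, hp, hqI, hevgoal⟩
            rw [actW_del hg hs hgb, hx_eq, ← hm0]
            simp
          · refine ⟨actW I G c.1 c.2.1 r', actW_reduced hirr hsym hred', p, c :: q,
              ms ++ (⟨c.1, c.2.1 * b.1, hgb⟩ : Letter L G) :: y, hstep, ?_, hp, hqI,
              hevgoal⟩
            rw [actW_merge hg hs hgb, hx_eq, ← hm0]
            simp

theorem key_final (hsym : ∀ a b, I a b → I b a) (α : L) {r' p z' : List (Letter L G)} {q u : List (Letter L G)}
    {a : {g : G α // g ≠ 1}}
    (hr' : r' = p ++ (⟨α, a⟩ : Letter L G) :: z') (hp : ∀ c ∈ p, c.1 ≠ α)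
    (hq : ∀ c ∈ q, I c.1 α)
    (heval : evalWord I G u = evalWord I G p * evalWord I G q)
    (hno : gpOf I G α a.1 * evalWord I G u ≠ evalWord I G u * gpOf I G α a.1) :
    splitW I G α r' = none := by
  cases hs : splitW I G α r' with
  | none => rfl
  | some pr =>
    exfalso
    obtain ⟨x2, b2, y2⟩ := pr
    obtain ⟨hw2, hx2⟩ := splitW_some hs
    have heq : p ++ (⟨α, a⟩ : Letter L G) :: z' =
        x2 ++ (⟨α, b2⟩ : Letter L G) :: y2 := hr' ▸ hw2
    rcases append_eq_append_cons heq with ⟨m, hp_eq, -⟩ | ⟨m, hx_eq, hmz⟩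
    · exact hp (⟨α, b2⟩ : Letter L G)
        (by rw [hp_eq]; exact List.mem_append.mpr (Or.inr (List.mem_cons_self))) rfl
    · cases m with
      | cons m0 ms =>
        simp only [List.cons_append, List.cons.injEq] at hmz
        refine (hx2 m0 ?_).1 ?_
        · rw [hx_eq]; exact List.mem_append.mpr (Or.inr (List.mem_cons_self))
        · rw [← hmz.1]
      | nil =>
        simp only [List.append_nil] at hx_eq
        have hpIα : ∀ e ∈ p, I e.1 α := fun e he => (hx2 e (hx_eq ▸ he)).2
        have h1 := eval_comm_right hpIα hsym a.1
        have h2 := eval_comm_right hq hsym a.1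
        apply hno
        rw [heval]
        calc gpOf I G α a.1 * (evalWord I G p * evalWord I G q)
            = (gpOf I G α a.1 * evalWord I G p) * evalWord I G q := by group
          _ = (evalWord I G p * gpOf I G α a.1) * evalWord I G q := by rw [h1]
          _ = evalWord I G p * (gpOf I G α a.1 * evalWord I G q) := by group
          _ = evalWord I G p * (evalWord I G q * gpOf I G α a.1) := by rw [h2]
          _ = (evalWord I G p * evalWord I G q) * gpOf I G α a.1 := by group

end GPAux9
section GPAux10

open List

variable {L : Type} {I : L → L → Prop} {G : L → Type} [∀ α, Group (G α)]
variable (hirr : ∀ a, ¬ I a a) (hsym : ∀ a b, I a b → I b a)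

/-- Flatten a list of chunks `(a_i, u_{i+1})` into a word. -/
def chFlat (α : L) (chs : List ({g : G α // g ≠ 1} × List (Letter L G))) :
    List (Letter L G) :=
  (chs.map (fun pr => (⟨α, pr.1⟩ : Letter L G) :: pr.2)).flatten

theorem chFlat_cons (α : L) (pr : {g : G α // g ≠ 1} × List (Letter L G)) (rest) :
    chFlat α (pr :: rest) =
      ((⟨α, pr.1⟩ : Letter L G) :: pr.2) ++ chFlat α rest := by
  simp [chFlat]

theorem countAlpha_chFlat (α : L) (chs : List ({g : G α // g ≠ 1} × List (Letter L G)))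
    (hfree : ∀ pr ∈ chs, ∀ c ∈ pr.2, c.1 ≠ α) :
    countAlpha G α (chFlat α chs) = chs.length := by
  induction chs with
  | nil => rfl
  | cons pr rest ih =>
    rw [chFlat_cons, countAlpha_append, countAlpha_cons, if_pos rfl,
      countAlpha_eq_zero (hfree pr (List.mem_cons_self)),
      ih (fun pr' h' => hfree pr' (List.mem_cons_of_mem _ h'))]
    simp [List.length_cons]
    omega

theorem main2 (α : L) (pr0 : {g : G α // g ≠ 1} × List (Letter L G))
    (rest : List ({g : G α // g ≠ 1} × List (Letter L G)))
    (hfree : ∀ pr ∈ pr0 :: rest, ∀ c ∈ pr.2, c.1 ≠ α)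
    (hcond : ∀ l1 pr pr' l2, pr0 :: rest = l1 ++ pr :: pr' :: l2 →
      gpOf I G α pr'.1.1 * evalWord I G pr.2 ≠ evalWord I G pr.2 * gpOf I G α pr'.1.1) :
    ∃ (r : List (Letter L G)) (hred : Reduced I G r) (z : List (Letter L G)),
      stFrom hirr hsym (chFlat α (pr0 :: rest)) (mkSR [] Reduced_nil) = mkSR r hred ∧
      r = (⟨α, pr0.1⟩ : Letter L G) :: z ∧ countAlpha G α r = rest.length + 1 := by
  induction rest generalizing pr0 with
  | nil =>
    have hs0 : stFrom hirr hsym (chFlat α [pr0]) (mkSR [] Reduced_nil) =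
        actR hirr hsym α pr0.1.1
          (stFrom hirr hsym pr0.2 (mkSR [] Reduced_nil)) := by
      rw [show chFlat α [pr0] = (⟨α, pr0.1⟩ : Letter L G) :: pr0.2 by simp [chFlat],
        stFrom_cons]
    obtain ⟨w1, hred1, hs1⟩ := (stFrom hirr hsym pr0.2 (mkSR [] Reduced_nil)).2
    have hseq : stFrom hirr hsym pr0.2 (mkSR [] Reduced_nil) = mkSR w1 hred1 :=
      Subtype.ext hs1
    have hcnt : countAlpha G α w1 = 0 := by
      have h1 := countR_stFrom_free hirr hsym
        (hfree pr0 (List.mem_cons_self)) (mkSR [] (Reduced_nil (I := I)))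
      rw [hseq, countR_mk, countR_mk] at h1
      exact h1.trans (countAlpha_nil α)
    have hsplit : splitW I G α w1 = none :=
      splitW_none_of_free (forall_ne_of_countAlpha_eq_zero hcnt)
    refine ⟨(⟨α, pr0.1⟩ : Letter L G) :: w1, ?_, w1, ?_, rfl, ?_⟩
    · rw [← actW_none pr0.1.2 hsplit]
      exact actW_reduced hirr hsym hred1
    · rw [hs0, hseq, actR_mk]
      apply Subtype.ext
      show mkSA (actW I G α pr0.1.1 w1) = mkSA _
      rw [actW_none pr0.1.2 hsplit]
    · rw [countAlpha_cons, if_pos rfl, hcnt]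
      rfl
  | cons pr1 rest' ih =>
    obtain ⟨r1, hred1, z1, hstack1, hr1, hcnt1⟩ := ih pr1
      (fun pr h' => hfree pr (List.mem_cons_of_mem _ h'))
      (fun l1 pr pr' l2 heq => hcond (pr0 :: l1) pr pr' l2 (by rw [heq]; rfl))
    obtain ⟨r', hred', p, q, z', hstack', hr'', hp, hq, heval⟩ :=
      key_lemma hirr hsym α pr0.2 (hfree pr0 (List.mem_cons_self)) r1 hred1
        pr1.1 z1 hr1
    have hno : gpOf I G α pr1.1.1 * evalWord I G pr0.2 ≠
        evalWord I G pr0.2 * gpOf I G α pr1.1.1 :=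
      hcond [] pr0 pr1 rest' rfl
    have hsplit : splitW I G α r' = none := key_final hsym α hr'' hp hq heval hno
    have hchain : stFrom hirr hsym (chFlat α (pr0 :: pr1 :: rest')) (mkSR [] Reduced_nil) =
        actR hirr hsym α pr0.1.1 (mkSR r' hred') := by
      rw [chFlat_cons, stFrom_append, hstack1, stFrom_cons, hstack']
    refine ⟨(⟨α, pr0.1⟩ : Letter L G) :: r', ?_, r', ?_, rfl, ?_⟩
    · rw [← actW_none pr0.1.2 hsplit]
      exact actW_reduced hirr hsym hred'
    · rw [hchain, actR_mk]
      apply Subtype.ext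
      show mkSA (actW I G α pr0.1.1 r') = mkSA _
      rw [actW_none pr0.1.2 hsplit]
    · have hc' : countAlpha G α r' = rest'.length + 1 := by
        have h1 := countR_stFrom_free hirr hsym
          (hfree pr0 (List.mem_cons_self)) (mkSR r1 hred1)
        rw [hstack', countR_mk, countR_mk] at h1
        rw [h1, hcnt1]
      rw [countAlpha_cons, if_pos rfl, hc']
      simp [List.length_cons]
      omega

end GPAux10
section GPAux11

open List

variable {L : Type} {I : L → L → Prop} {G : L → Type} [∀ α, Group (G α)]

theorem ofFn_split {X : Type*} (j : ℕ) :
    ∀ (n : ℕ) (f : Fin n → X) (hj : j + 1 < n),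
      ∃ A B, A.length = j ∧ List.ofFn f = A ++ f ⟨j, by omega⟩ :: f ⟨j + 1, hj⟩ :: B := by
  induction j with
  | zero =>
    intro n f hj
    match n, hj with
    | (m + 2), hj =>
      refine ⟨[], List.ofFn (fun i : Fin m => f i.succ.succ), rfl, ?_⟩
      rw [List.ofFn_succ, List.ofFn_succ]
      simp only [List.nil_append]
      congr 1
  | succ j' ihj =>
    intro n f hj
    match n, hj with
    | (m + 1), hj =>
      obtain ⟨A, B, hAlen, hAB⟩ := ihj m (fun i => f i.succ) (by omega)
      refine ⟨f 0 :: A, B, by simp [hAlen], ?_⟩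
      rw [List.ofFn_succ, hAB]
      simp only [List.cons_append]
      congr 2

theorem getElem_append_cons_self {X : Type*} (l1 : List X) (x : X) (l2 : List X) :
    (l1 ++ x :: l2)[l1.length]'(by simp) = x := by
  rw [List.getElem_append]
  simp

theorem getElem_append_cons_succ {X : Type*} (l1 : List X) (x y : X) (l2 : List X) :
    (l1 ++ x :: y :: l2)[l1.length + 1]'(by simp) = y := by
  rw [List.getElem_append]
  simp

theorem cond_iff (α : L) (aj a' : {g : G α // g ≠ 1}) (uu : List (Letter L G)) :
    evalWord I G ((⟨α, aj⟩ : Letter L G) :: uu ++ [(⟨α, a'⟩ : Letter L G)]) =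
      evalWord I G ((⟨α, aj⟩ : Letter L G) :: (⟨α, a'⟩ : Letter L G) :: uu) ↔
    evalWord I G uu * gpOf I G α a'.1 = gpOf I G α a'.1 * evalWord I G uu := by
  rw [show (⟨α, aj⟩ : Letter L G) :: uu ++ [(⟨α, a'⟩ : Letter L G)] =
    (⟨α, aj⟩ : Letter L G) :: (uu ++ [(⟨α, a'⟩ : Letter L G)]) from rfl]
  rw [evalWord_cons, evalWord_cons, evalWord_cons, evalWord_append, evalWord_cons,
    evalWord_nil, mul_one]
  exact mul_right_inj _

end GPAux11
theorem alpha_reduced_iff_no_adjacent_merge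
    {L : Type} [Finite L] (I : L → L → Prop) (G : L → Type) [∀ α, Group (G α)]
    (hirr : ∀ α, ¬ I α α) (hsym : ∀ α β, I α β → I β α)
    (α : L) (n : ℕ)
    (u : Fin (n + 1) → List (Letter L G)) (a : Fin n → {g : G α // g ≠ 1})
    (hu : ∀ i, ∀ c ∈ u i, c.1 ≠ α)
    (w : List (Letter L G))
    (hw : w = u 0 ++
      (List.ofFn fun j : Fin n => (⟨α, a j⟩ : Letter L G) :: u j.succ).flatten) :
    AlphaReduced I G α w ↔
      ∀ (j : Fin n) (hj : (j : ℕ) + 1 < n),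
        evalWord I G ((⟨α, a j⟩ : Letter L G) :: u j.succ ++
            [(⟨α, a ⟨(j : ℕ) + 1, hj⟩⟩ : Letter L G)]) ≠
        evalWord I G ((⟨α, a j⟩ : Letter L G) ::
            (⟨α, a ⟨(j : ℕ) + 1, hj⟩⟩ : Letter L G) :: u j.succ) := by
  constructor
  · -- forward direction
    intro hAR j hj heq
    have hcomm := (cond_iff α (a j) (a ⟨(j : ℕ) + 1, hj⟩) (u j.succ)).mp heq
    obtain ⟨A, B, hAlen, hAB⟩ := ofFn_split (X := List (Letter L G)) (j : ℕ) n
      (fun i => (⟨α, a i⟩ : Letter L G) :: u i.succ) hj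
    simp only [Fin.eta] at hAB
    have hwsplit : w = u 0 ++ (A.flatten ++
        (((⟨α, a j⟩ : Letter L G) :: u j.succ) ++
          (((⟨α, a ⟨(j : ℕ) + 1, hj⟩⟩ : Letter L G) ::
            u (⟨(j : ℕ) + 1, hj⟩ : Fin n).succ) ++ B.flatten))) := by
      rw [hw, hAB, List.flatten_append, List.flatten_cons, List.flatten_cons]
    have hfinal : ∀ M : List (Letter L G),
        evalWord I G M = gpOf I G α ((a j).1 * (a ⟨(j : ℕ) + 1, hj⟩).1) →
        countAlpha G α M ≤ 1 → False := by
      intro M hM hMc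
      refine hAR (u 0 ++ (A.flatten ++ (M ++ (u j.succ ++
        (u (⟨(j : ℕ) + 1, hj⟩ : Fin n).succ ++ B.flatten))))) ?_ ?_
      · rw [hwsplit]
        simp only [countAlpha_append, countAlpha_cons, eq_self_iff_true, if_true]
        omega
      · rw [hwsplit]
        simp only [evalWord_append, evalWord_cons]
        rw [hM, map_mul]
        calc evalWord I G (u 0) * (evalWord I G A.flatten *
              (gpOf I G α (a j).1 * gpOf I G α (a ⟨(j : ℕ) + 1, hj⟩).1 *
                (evalWord I G (u j.succ) *
                  (evalWord I G (u (⟨(j : ℕ) + 1, hj⟩ : Fin n).succ) *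
                    evalWord I G B.flatten))))
            = evalWord I G (u 0) * (evalWord I G A.flatten *
              (gpOf I G α (a j).1 *
                (gpOf I G α (a ⟨(j : ℕ) + 1, hj⟩).1 * evalWord I G (u j.succ) *
                  (evalWord I G (u (⟨(j : ℕ) + 1, hj⟩ : Fin n).succ) *
                    evalWord I G B.flatten)))) := by group
          _ = evalWord I G (u 0) * (evalWord I G A.flatten *
              (gpOf I G α (a j).1 *
                (evalWord I G (u j.succ) * gpOf I G α (a ⟨(j : ℕ) + 1, hj⟩).1 *
                  (evalWord I G (u (⟨(j : ℕ) + 1, hj⟩ : Fin n).succ) *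
                    evalWord I G B.flatten)))) := by rw [hcomm]
          _ = evalWord I G (u 0) * (evalWord I G A.flatten *
              (gpOf I G α (a j).1 * evalWord I G (u j.succ) *
                (gpOf I G α (a ⟨(j : ℕ) + 1, hj⟩).1 *
                  evalWord I G (u (⟨(j : ℕ) + 1, hj⟩ : Fin n).succ) *
                    evalWord I G B.flatten))) := by group
    by_cases hp : (a j).1 * (a ⟨(j : ℕ) + 1, hj⟩).1 = 1
    · exact hfinal [] (by rw [evalWord_nil, hp, map_one]) (by rw [countAlpha_nil]; omega)
    · exact hfinal [(⟨α, (a j).1 * (a ⟨(j : ℕ) + 1, hj⟩).1, hp⟩ : Letter L G)]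
        (by rw [evalWord_cons, evalWord_nil, mul_one])
        (by rw [countAlpha_cons, countAlpha_nil]; split <;> omega)
  · -- backward direction
    intro hcond
    cases n with
    | zero =>
      intro w' hlt heval
      have hz : countAlpha G α w = 0 := by
        rw [hw]
        have h0 : (List.ofFn fun j : Fin 0 => (⟨α, a j⟩ : Letter L G) :: u j.succ) = [] := by
          simp
        rw [h0]
        simp only [List.flatten_nil, List.append_nil]
        exact countAlpha_eq_zero (hu 0)
      rw [hz] at hlt
      omega
    | succ m =>
      intro w' hlt heval
      have hfree : ∀ pr ∈ (List.ofFn fun i : Fin (m + 1) =>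
          ((a i, u i.succ) : {g : G α // g ≠ 1} × List (Letter L G))),
          ∀ c ∈ pr.2, c.1 ≠ α := by
        intro pr hpr
        obtain ⟨i, hi⟩ := List.mem_ofFn.mp hpr
        rw [← hi]
        exact hu i.succ
      have hofn : (List.ofFn fun i : Fin (m + 1) =>
          ((a i, u i.succ) : {g : G α // g ≠ 1} × List (Letter L G))) =
          (a 0, u (0 : Fin (m + 1)).succ) ::
            (List.ofFn fun i : Fin m => (a i.succ, u i.succ.succ)) := by
        rw [List.ofFn_succ]
      have hflat : w = u 0 ++ chFlat α (List.ofFn fun i : Fin (m + 1) =>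
          ((a i, u i.succ) : {g : G α // g ≠ 1} × List (Letter L G))) := by
        rw [hw]
        congr 1
        unfold chFlat
        rw [List.map_ofFn]
        rfl
      obtain ⟨r, hred, z, hstack, hrz, hcnt⟩ := main2 hirr hsym α
        (a 0, u (0 : Fin (m + 1)).succ)
        (List.ofFn fun i : Fin m => (a i.succ, u i.succ.succ))
        (by rw [← hofn]; exact hfree)
        (by
          intro l1 pr pr' l2 heqL
          rw [← hofn] at heqL
          have hlen : l1.length + 1 < m + 1 := by
            have hlen0 := congrArg List.length heqL
            simp at hlen0
            omega
          obtain ⟨A, B, hAlen, hAB⟩ := ofFn_split (X := _) l1.length (m + 1)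
            (fun i : Fin (m + 1) =>
              ((a i, u i.succ) : {g : G α // g ≠ 1} × List (Letter L G))) hlen
          rw [heqL] at hAB
          obtain ⟨hl1A, htail⟩ := List.append_inj hAB hAlen.symm
          simp only [List.cons.injEq] at htail
          obtain ⟨hpr, hpr', -⟩ := htail
          intro hEq
          apply hcond ⟨l1.length, by omega⟩ (show l1.length + 1 < m + 1 from hlen)
          rw [cond_iff]
          rw [hpr, hpr'] at hEq
          exact hEq.symm)
      have hstw : stFrom hirr hsym w (mkSR [] Reduced_nil) =
          stFrom hirr hsym (u 0) (mkSR r hred) := by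
        rw [hflat, stFrom_append, hofn, hstack]
      have hcw : countR α (stFrom hirr hsym w (mkSR [] Reduced_nil)) = m + 1 := by
        rw [hstw, countR_stFrom_free hirr hsym (hu 0), countR_mk, hcnt]
        simp
      have hsame : stFrom hirr hsym w' (mkSR [] Reduced_nil) =
          stFrom hirr hsym w (mkSR [] Reduced_nil) := by
        unfold stFrom
        rw [heval]
      have hle := countR_stFrom_le hirr hsym α w' (mkSR [] Reduced_nil)
      rw [hsame, hcw, countR_mk, countAlpha_nil] at hle
      have hcntw : countAlpha G α w = m + 1 := by
        rw [hflat, countAlpha_append, countAlpha_eq_zero (hu 0),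
          countAlpha_chFlat α _ hfree, zero_add]
        simp
      rw [hcntw] at hlt
      omega
end
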